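/- arXiv:1806.10983 — 2 statements merged into one kernel-verified Lean document; each statement's English description precedes it below -/
import Mathlib

section
/- If a countable discrete group Γ has a central element of infinite order, then the complex group ring ℂΓ is not C*_r-unique, i.e., there exists a C*-norm on ℂΓ properly majorized by the reduced norm. -/
set_option maxHeartbeats 1000000
set_option synthInstance.maxHeartbeats 400000
noncomputable section

open scoped ENNReal

/-- ℓ²(Γ), the Hilbert space of square-summable complex functions on `G`. -/
abbrev l2 (G : Type*) := lp (fun _ : G => ℂ) 2

namespace GroupCstar

lemma two_toReal_pos : 0 < (2 : ℝ≥0∞).toReal := by norm_num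

/-- The linear isometry of ℓ² spaces induced by a bijection of index sets,
`f ↦ f ∘ e.symm`. -/
def lpShift {α β : Type*} (e : α ≃ β) : l2 α ≃ₗᵢ[ℂ] l2 β where
  toFun f := ⟨fun b => f (e.symm b), by
    show Memℓp _ 2
    rw [memℓp_gen_iff two_toReal_pos]
    exact e.symm.summable_iff.2 ((lp.memℓp f).summable two_toReal_pos)⟩
  invFun f := ⟨fun a => f (e a), by
    show Memℓp _ 2
    rw [memℓp_gen_iff two_toReal_pos]
    exact e.summable_iff.2 ((lp.memℓp f).summable two_toReal_pos)⟩
  map_add' f g := rfl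
  map_smul' c f := rfl
  left_inv f := by ext a; simp
  right_inv f := by ext b; simp
  norm_map' f := by
    rw [lp.norm_eq_tsum_rpow two_toReal_pos, lp.norm_eq_tsum_rpow two_toReal_pos]
    congr 1
    exact Equiv.tsum_eq e.symm fun b => ‖f b‖ ^ (2 : ℝ≥0∞).toReal

@[simp] lemma lpShift_apply {α β : Type*} (e : α ≃ β) (f : l2 α) (b : β) :
    (lpShift e f : ∀ _ : β, ℂ) b = f (e.symm b) := rfl

variable (G : Type*) [Group G]

/-- The algebra `B(ℓ²(G))` of bounded operators on `ℓ²(G)`. -/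
abbrev B := l2 G →L[ℂ] l2 G

variable {G}

/-- The left regular representation of a group element, as a bounded (unitary) operator on
ℓ²(G): `(leftReg g f) x = f (g⁻¹ * x)`. -/
def leftReg (g : G) : B G :=
  (lpShift (Equiv.mulLeft g)).toLinearIsometry.toContinuousLinearMap

@[simp] lemma leftReg_apply (g : G) (f : l2 G) (x : G) :
    (leftReg g f : ∀ _ : G, ℂ) x = f (g⁻¹ * x) := rfl

variable (G)

/-- The left regular representation as a monoid homomorphism into bounded operators. -/
def leftRegMonoidHom : G →* B G where
  toFun := leftReg
  map_one' := by ext f x; simp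
  map_mul' g h := by ext f x; simp [mul_assoc]

/-- The left regular representation `λ` of the complex group algebra `ℂ[G]` on `ℓ²(G)`,
extending `g ↦ leftReg g` linearly. -/
def lam : MonoidAlgebra ℂ G →ₐ[ℂ] B G :=
  (MonoidAlgebra.lift ℂ (B G) G) (leftRegMonoidHom G)

/-- δ_e, the canonical trace vector in ℓ²(G). -/
def deltaOne : l2 G :=
  letI := Classical.decEq G
  lp.single 2 (1 : G) (1 : ℂ)

variable {G}

/-- The canonical trace `τ(x) = ⟨x δ_e, δ_e⟩` on `B(ℓ²(G))` (in particular on the group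
von Neumann algebra).  Note: with the mathematician's convention (linear in the first
variable) `⟨x δ_e, δ_e⟩` is `inner δ_e (x δ_e)` in Mathlib's convention. -/
def tau (x : B G) : ℂ := inner (𝕜 := ℂ) (deltaOne G) (x (deltaOne G))

/-- The commutant of a set of bounded operators. -/
def commutant (S : Set (B G)) : Set (B G) := {x | ∀ s ∈ S, s * x = x * s}

variable (G)

/-- The group von Neumann algebra `LG`, realized as the double commutant of `λ(ℂ[G])`
inside `B(ℓ²(G))`. -/
def vN : Set (B G) := commutant (commutant (Set.range (lam G)))

/-- The center `Z(LG)` of the group von Neumann algebra. -/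
def vNCenter : Set (B G) := {x | x ∈ vN G ∧ ∀ y ∈ vN G, x * y = y * x}

variable {G}

/-- An orthogonal projection: a self-adjoint idempotent. -/
def IsProjection (p : B G) : Prop := IsSelfAdjoint p ∧ p * p = p

variable (G)

/-- The central granularity `σ(G)`: the infimum of the traces of the nonzero orthogonal
projections in the center of the group von Neumann algebra. -/
def centralGranularity : ℝ :=
  sInf ((fun p => (tau p).re) '' {p : B G | p ∈ vNCenter G ∧ IsProjection p ∧ p ≠ 0})

/-- The set of orders of finite subgroups of `G`. -/
def finSubgroupOrders : Set ℕ := {n | ∃ H : Subgroup G, Finite H ∧ Nat.card H = n}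

open scoped Classical in
/-- The torsion multiplier `θ(G) = 1 / lcm {|H| : H ≤ G finite}`, with the convention
that the lcm of an unbounded set is `∞` and `1/∞ = 0`. -/
def torsionMultiplier : ℝ :=
  if h : (finSubgroupOrders G).Finite then ((h.toFinset.lcm id : ℕ) : ℝ)⁻¹ else 0

/-- The additive subgroup of `ℝ` generated by the reciprocals of the orders of the finite
subgroups of `G`. -/
def atiyahGroup : AddSubgroup ℝ :=
  AddSubgroup.closure {x : ℝ | ∃ H : Subgroup G, Finite H ∧ x = ((Nat.card H : ℝ))⁻¹}

/-- The operator `L_A` on `ℓ²(G)ⁿ` associated to a matrix `A ∈ Mₙ(ℂ[G])`, given by applying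
`λ` entrywise and letting the resulting matrix of operators act. -/
def LA {n : ℕ} (A : Matrix (Fin n) (Fin n) (MonoidAlgebra ℂ G)) :
    PiLp 2 (fun _ : Fin n => l2 G) →L[ℂ] PiLp 2 (fun _ : Fin n => l2 G) :=
  letI e := PiLp.continuousLinearEquiv 2 ℂ (fun _ : Fin n => l2 G)
  ((e.symm : (∀ _ : Fin n, l2 G) →L[ℂ] PiLp 2 (fun _ : Fin n => l2 G)).comp
      (ContinuousLinearMap.pi fun i =>
        ∑ j, (lam G (A i j)).comp (ContinuousLinearMap.proj j))).comp
    (e : PiLp 2 (fun _ : Fin n => l2 G) →L[ℂ] (∀ _ : Fin n, l2 G))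

/-- The vector `δ_e eᵢ` in `ℓ²(G)ⁿ`. -/
def stdv {n : ℕ} (i : Fin n) : PiLp 2 (fun _ : Fin n => l2 G) :=
  (WithLp.equiv 2 (∀ _ : Fin n, l2 G)).symm (Pi.single i (deltaOne G))

/-- The von Neumann dimension `dim_{LG} ker L_A = Σᵢ ⟨P (δ_e eᵢ), δ_e eᵢ⟩`, where `P` is the
orthogonal projection onto the kernel of `L_A`. -/
def kerDim {n : ℕ} (A : Matrix (Fin n) (Fin n) (MonoidAlgebra ℂ G)) : ℝ :=
  haveI : CompleteSpace (PiLp 2 (fun _ : Fin n => l2 G)) := inferInstance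
  haveI : Submodule.HasOrthogonalProjection (LinearMap.ker (LA G A :
      PiLp 2 (fun _ : Fin n => l2 G) →ₗ[ℂ] PiLp 2 (fun _ : Fin n => l2 G))) :=
    Submodule.HasOrthogonalProjection.ofCompleteSpace _
  ∑ i, (inner (𝕜 := ℂ)
    ((Submodule.orthogonalProjectionOnto (LinearMap.ker (LA G A :
        PiLp 2 (fun _ : Fin n => l2 G) →ₗ[ℂ] PiLp 2 (fun _ : Fin n => l2 G))) (stdv G i) :
        PiLp 2 (fun _ : Fin n => l2 G)))
    (stdv G i)).re

/-- `G` satisfies the strong Atiyah conjecture: all von Neumann kernel dimensions of matrices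
over `ℂ[G]` lie in the additive subgroup generated by the reciprocals of the orders of finite
subgroups. -/
def SatisfiesStrongAtiyah : Prop :=
  ∀ n : ℕ, 1 ≤ n → ∀ A : Matrix (Fin n) (Fin n) (MonoidAlgebra ℂ G), kerDim G A ∈ atiyahGroup G

variable {G}

/-- The canonical involution on the complex group algebra: `star (Σ cg·g) = Σ conj(cg)·g⁻¹`. -/
def gaStar (a : MonoidAlgebra ℂ G) : MonoidAlgebra ℂ G :=
  MonoidAlgebra.ofCoeff
    (Finsupp.mapDomain (fun g : G => g⁻¹) (Finsupp.mapRange (starRingEnd ℂ) (map_zero _) a.coeff))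

/-- `N` is a C*-norm on the group algebra `ℂ[G]`: a genuine algebra norm satisfying the
C*-identity `N(a* a) = N(a)²`. -/
def IsCstarNorm (N : MonoidAlgebra ℂ G → ℝ) : Prop :=
  (∀ a, 0 ≤ N a) ∧
  (∀ a, N a = 0 ↔ a = 0) ∧
  (∀ a b, N (a + b) ≤ N a + N b) ∧
  (∀ (c : ℂ) (a), N (c • a) = ‖c‖ * N a) ∧
  (∀ a b, N (a * b) ≤ N a * N b) ∧
  (∀ a, N (gaStar a * a) = N a ^ 2)

variable (G)

/-- `ℂ[G]` is C*_r-unique: no C*-norm on `ℂ[G]` is properly majorized by the reduced norm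
`a ↦ ‖λ(a)‖`. -/
def IsCstarRedUnique : Prop :=
  ¬ ∃ N : MonoidAlgebra ℂ G → ℝ, IsCstarNorm N ∧
      (∀ a, N a ≤ ‖lam G a‖) ∧ (∃ a, N a < ‖lam G a‖)

variable {G}

/-- The conjugacy class of an element. -/
def conjClass (g : G) : Set G := {x | IsConj g x}

variable (G)

/-- The FC-centre: the set of elements with finite conjugacy class. -/
def fcCentre : Set G := {g : G | (conjClass g).Finite}

end GroupCstar

open GroupCstar

namespace CstarProof

open GroupCstar ContinuousLinearMap Finset
open scoped InnerProductSpace ComplexConjugate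

variable {Γ : Type*} [Group Γ]

/-- The quotient of `Γ` by the subgroup generated by `z`. -/
abbrev Qt (z : Γ) := Γ ⧸ Subgroup.zpowers z

variable (z : Γ)

/-- A section of the quotient map. -/
def sec (q : Qt z) : Γ := Quotient.out q

lemma mk_sec (q : Qt z) : ((sec z q : Γ) : Qt z) = q := QuotientGroup.out_eq' q

lemma mk_mul_sec (γ : Γ) (q : Qt z) : ((γ * sec z q : Γ) : Qt z) = γ • q := by
  have := MulAction.Quotient.smul_mk (Subgroup.zpowers z) γ (sec z q)
  rw [smul_eq_mul] at this
  rw [← this, mk_sec]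

lemma exists_omg (γ : Γ) (q : Qt z) :
    ∃ m : ℤ, z ^ m = (γ * sec z q)⁻¹ * sec z (γ • q) := by
  have h : ((γ * sec z q : Γ) : Qt z) = ((sec z (γ • q) : Γ) : Qt z) := by
    rw [mk_mul_sec, mk_sec]
  exact Subgroup.mem_zpowers_iff.mp (QuotientGroup.eq.mp h)

/-- The `ℤ`-valued cocycle: `γ * sec q = z ^ (omg γ q) * sec (γ • q)`. -/
def omg (γ : Γ) (q : Qt z) : ℤ := -(Classical.choose (exists_omg z γ q))

variable {z}
variable (hz : z ∈ Subgroup.center Γ) (hord : ¬ IsOfFinOrder z)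

section central
include hz

lemma zpow_comm (g : Γ) (m : ℤ) : g * z ^ m = z ^ m * g := by
  have h : Commute g z := Subgroup.mem_center_iff.mp hz g
  exact h.zpow_right m

lemma omg_spec (γ : Γ) (q : Qt z) :
    γ * sec z q = z ^ omg z γ q * sec z (γ • q) := by
  have h := Classical.choose_spec (exists_omg z γ q)
  set m := Classical.choose (exists_omg z γ q) with hm
  have h1 : (γ * sec z q) * z ^ m = sec z (γ • q) := by
    rw [h, mul_inv_cancel_left]
  have h2 : γ * sec z q = sec z (γ • q) * z ^ (-m) := by
    rw [← h1, zpow_neg, mul_assoc, mul_inv_cancel, mul_one]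
  rw [h2, ← zpow_comm hz, omg]

lemma zpow_smul_eq (m : ℤ) (q : Qt z) : z ^ m • q = q := by
  induction q using QuotientGroup.induction_on with
  | H x =>
    have h := MulAction.Quotient.smul_mk (Subgroup.zpowers z) (z ^ m) x
    rw [smul_eq_mul] at h
    rw [h, QuotientGroup.eq]
    refine Subgroup.mem_zpowers_iff.mpr ⟨-m, ?_⟩
    rw [mul_inv_rev, ← zpow_neg, mul_assoc, ← zpow_comm hz x (-m), inv_mul_cancel_left]

end central

section inj
include hz hord

lemma zpow_inj : Function.Injective fun n : ℤ => z ^ n :=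
  injective_zpow_iff_not_isOfFinOrder.mpr hord

lemma decomp_inj {m m' : ℤ} {q q' : Qt z}
    (h : z ^ m * sec z q = z ^ m' * sec z q') : m = m' ∧ q = q' := by
  have hq : q = q' := by
    have h2 := congrArg (QuotientGroup.mk (s := Subgroup.zpowers z)) h
    have e1 : ((z ^ m * sec z q : Γ) : Qt z) = q := by
      rw [mk_mul_sec, zpow_smul_eq hz]
    have e2 : ((z ^ m' * sec z q' : Γ) : Qt z) = q' := by
      rw [mk_mul_sec, zpow_smul_eq hz]
    rwa [e1, e2] at h2
  subst hq
  refine ⟨zpow_inj hz hord (mul_right_cancel h), rfl⟩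

lemma omg_unique {γ : Γ} {q : Qt z} {m : ℤ}
    (h : γ * sec z q = z ^ m * sec z (γ • q)) : m = omg z γ q :=
  ((decomp_inj hz hord ((omg_spec hz γ q).symm.trans h)).1).symm

lemma omg_cocycle (γ₁ γ₂ : Γ) (q : Qt z) :
    omg z (γ₁ * γ₂) q = omg z γ₁ (γ₂ • q) + omg z γ₂ q := by
  refine (omg_unique hz hord ?_).symm
  have h1 : (γ₁ * γ₂) * sec z q = γ₁ * (z ^ omg z γ₂ q * sec z (γ₂ • q)) := by
    rw [mul_assoc, omg_spec hz γ₂ q]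
  rw [h1, ← mul_assoc, zpow_comm hz, mul_assoc, omg_spec hz γ₁ (γ₂ • q), ← mul_assoc,
    ← zpow_add, mul_smul]
  ring_nf

lemma omg_one (q : Qt z) : omg z 1 q = 0 :=
  (omg_unique hz hord (by simp)).symm

lemma omg_inv (γ : Γ) (q : Qt z) : omg z γ⁻¹ (γ • q) = - omg z γ q := by
  have h := omg_cocycle hz hord γ⁻¹ γ q
  rw [inv_mul_cancel, omg_one hz hord] at h
  omega

lemma omg_self (q : Qt z) : omg z z q = 1 := by
  refine (omg_unique hz hord ?_).symm
  have h1 : z • q = q := by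
    have := zpow_smul_eq hz (z := z) 1 q
    rwa [zpow_one] at this
  rw [h1, zpow_one]

end inj

end CstarProof

-- Part 2: the twisted representation
namespace CstarProof

open GroupCstar ContinuousLinearMap Finset
open scoped InnerProductSpace ComplexConjugate Classical

variable {Γ : Type*} [Group Γ]

lemma memlp_twist {α : Type*} (e : Equiv.Perm α) (c : α → ℂ) (hc : ∀ x, ‖c x‖ = 1)
    (f : l2 α) : Memℓp (fun x => c x * f (e x)) 2 := by
  rw [memℓp_gen_iff two_toReal_pos]
  have h : (fun x => ‖c x * f (e x)‖ ^ (2 : ℝ≥0∞).toReal)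
      = (fun y => ‖f y‖ ^ (2 : ℝ≥0∞).toReal) ∘ e := by
    funext x
    simp only [Function.comp_apply, norm_mul, hc x, one_mul]
  rw [h]
  exact (e.summable_iff (f := fun y => ‖f y‖ ^ (2 : ℝ≥0∞).toReal)).mpr
    ((lp.memℓp f).summable two_toReal_pos)

lemma norm_twist {α : Type*} (e : Equiv.Perm α) (c : α → ℂ) (hc : ∀ x, ‖c x‖ = 1)
    (f : l2 α) :
    ‖(⟨fun x => c x * f (e x), memlp_twist e c hc f⟩ : l2 α)‖ = ‖f‖ := by
  rw [lp.norm_eq_tsum_rpow two_toReal_pos, lp.norm_eq_tsum_rpow two_toReal_pos]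
  congr 1
  have h1 : ∀ x, ‖c x * f (e x)‖ ^ (2 : ℝ≥0∞).toReal
      = ‖f (e x)‖ ^ (2 : ℝ≥0∞).toReal := by
    intro x; rw [norm_mul, hc, one_mul]
  calc ∑' x, ‖c x * f (e x)‖ ^ (2 : ℝ≥0∞).toReal
      = ∑' x, ‖f (e x)‖ ^ (2 : ℝ≥0∞).toReal := tsum_congr h1
    _ = _ := Equiv.tsum_eq e fun y => ‖f y‖ ^ (2 : ℝ≥0∞).toReal

variable {z : Γ} (hz : z ∈ Subgroup.center Γ) (hord : ¬ IsOfFinOrder z)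
variable {t : ℂ}

lemma unimod (ht : ‖t‖ = 1) (m : ℤ) : ‖t ^ m‖ = 1 := by
  rw [norm_zpow, ht, one_zpow]

lemma tne (ht : ‖t‖ = 1) : t ≠ 0 := by
  intro h; rw [h] at ht; simp at ht

/-- The operator of the quasi-regular representation twisted by `t^ω`. -/
def twisted (ht : ‖t‖ = 1) (γ : Γ) : l2 (Qt z) ≃ₗᵢ[ℂ] l2 (Qt z) where
  toFun f := ⟨fun q => t ^ omg z γ (γ⁻¹ • q) * f (γ⁻¹ • q),
    memlp_twist (MulAction.toPerm γ⁻¹) _ (fun q => unimod ht _) f⟩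
  invFun f := ⟨fun q => t ^ (-omg z γ q) * f (γ • q),
    memlp_twist (MulAction.toPerm γ) _ (fun q => unimod ht _) f⟩
  map_add' f g := by
    ext q
    show t ^ omg z γ (γ⁻¹ • q) * (f + g) (γ⁻¹ • q) = _
    rw [lp.coeFn_add, Pi.add_apply, mul_add]
    rfl
  map_smul' c f := by
    ext q
    show t ^ omg z γ (γ⁻¹ • q) * (c • f) (γ⁻¹ • q) = _
    rw [lp.coeFn_smul, Pi.smul_apply, smul_eq_mul, mul_left_comm]
    rfl
  left_inv f := by
    ext q
    show t ^ (-omg z γ q) * (t ^ omg z γ (γ⁻¹ • (γ • q)) * f (γ⁻¹ • (γ • q))) = f q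
    rw [inv_smul_smul, ← mul_assoc, ← zpow_add₀ (tne ht), neg_add_cancel, zpow_zero, one_mul]
  right_inv f := by
    ext q
    show t ^ omg z γ (γ⁻¹ • q) * (t ^ (-omg z γ (γ⁻¹ • q)) * f (γ • γ⁻¹ • q)) = f q
    rw [smul_inv_smul, ← mul_assoc, ← zpow_add₀ (tne ht), add_neg_cancel, zpow_zero, one_mul]
  norm_map' f := norm_twist (MulAction.toPerm γ⁻¹) _ (fun q => unimod ht _) f

include hz hord in
lemma twisted_exp (γ₁ γ₂ : Γ) (q : Qt z) :
    omg z (γ₁ * γ₂) (γ₂⁻¹ • γ₁⁻¹ • q)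
      = omg z γ₁ (γ₁⁻¹ • q) + omg z γ₂ (γ₂⁻¹ • (γ₁⁻¹ • q)) := by
  have h := omg_cocycle hz hord γ₁ γ₂ (γ₂⁻¹ • γ₁⁻¹ • q)
  rwa [smul_inv_smul] at h

/-- The twisted quasi-regular representation as a monoid homomorphism. -/
def piHom (hz : z ∈ Subgroup.center Γ) (hord : ¬ IsOfFinOrder z) (ht : ‖t‖ = 1) :
    Γ →* (l2 (Qt z) →L[ℂ] l2 (Qt z)) where
  toFun γ := (twisted (z := z) ht γ).toLinearIsometry.toContinuousLinearMap
  map_one' := by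
    ext f q
    show t ^ omg z 1 ((1 : Γ)⁻¹ • q) * f ((1 : Γ)⁻¹ • q) = f q
    rw [inv_one, one_smul, omg_one hz hord, zpow_zero, one_mul]
  map_mul' γ₁ γ₂ := by
    ext f q
    show t ^ omg z (γ₁ * γ₂) ((γ₁ * γ₂)⁻¹ • q) * f ((γ₁ * γ₂)⁻¹ • q)
      = t ^ omg z γ₁ (γ₁⁻¹ • q) * (t ^ omg z γ₂ (γ₂⁻¹ • (γ₁⁻¹ • q)) * f (γ₂⁻¹ • γ₁⁻¹ • q))
    have e1 : (γ₁ * γ₂)⁻¹ • q = γ₂⁻¹ • γ₁⁻¹ • q := by rw [mul_inv_rev, mul_smul]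
    rw [e1, ← mul_assoc, ← zpow_add₀ (tne ht), ← twisted_exp hz hord]

@[simp] lemma piHom_apply (ht : ‖t‖ = 1) (γ : Γ) (f : l2 (Qt z)) (q : Qt z) :
    (piHom hz hord ht γ f : ∀ _ : Qt z, ℂ) q = t ^ omg z γ (γ⁻¹ • q) * f (γ⁻¹ • q) := rfl

/-- The twisted quasi-regular representation of the group algebra. -/
def piRep (hz : z ∈ Subgroup.center Γ) (hord : ¬ IsOfFinOrder z) (ht : ‖t‖ = 1) :
    MonoidAlgebra ℂ Γ →ₐ[ℂ] (l2 (Qt z) →L[ℂ] l2 (Qt z)) :=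
  MonoidAlgebra.lift ℂ _ Γ (piHom hz hord ht)

lemma piHom_single (ht : ‖t‖ = 1) (γ : Γ) (q : Qt z) (c : ℂ) :
    piHom hz hord ht γ (lp.single 2 q c) = lp.single 2 (γ • q) (t ^ omg z γ q * c) := by
  ext r
  by_cases h : r = γ • q
  · subst h
    rw [piHom_apply, inv_smul_smul, lp.single_apply_self, lp.single_apply_self]
  · have h2 : γ⁻¹ • r ≠ q := fun hh => h (by rw [← hh, smul_inv_smul])
    rw [piHom_apply, lp.single_apply_ne _ _ _ h2, mul_zero, lp.single_apply_ne _ _ _ h]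

lemma leftReg_single (g x : Γ) (c : ℂ) :
    leftReg g (lp.single 2 x c) = lp.single 2 (g * x) c := by
  ext y
  by_cases h : y = g * x
  · subst h
    rw [leftReg_apply, inv_mul_cancel_left, lp.single_apply_self, lp.single_apply_self]
  · have h2 : g⁻¹ * y ≠ x := fun hh => h (by rw [← hh, mul_inv_cancel_left])
    rw [leftReg_apply, lp.single_apply_ne _ _ _ h2, lp.single_apply_ne _ _ _ h]

lemma piHom_star (ht : ‖t‖ = 1) (γ : Γ) :
    star (piHom hz hord ht γ) = piHom hz hord ht γ⁻¹ := by
  rw [ContinuousLinearMap.star_eq_adjoint]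
  symm
  rw [ContinuousLinearMap.eq_adjoint_iff]
  intro x y
  calc inner (𝕜 := ℂ) (piHom hz hord ht γ⁻¹ x) y
      = inner (𝕜 := ℂ) ((twisted (z := z) ht γ) (piHom hz hord ht γ⁻¹ x))
          ((twisted (z := z) ht γ) y) :=
        ((twisted (z := z) ht γ).inner_map_map _ _).symm
    _ = inner (𝕜 := ℂ) x (piHom hz hord ht γ y) := by
        have h : piHom hz hord ht γ (piHom hz hord ht γ⁻¹ x) = x := by
          rw [← ContinuousLinearMap.mul_apply, ← map_mul, mul_inv_cancel, map_one,
            ContinuousLinearMap.one_apply]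
        exact congrArg (fun w => inner (𝕜 := ℂ) w ((twisted (z := z) ht γ) y)) h

lemma leftReg_star (g : Γ) : star (leftReg g : B Γ) = leftReg g⁻¹ := by
  rw [ContinuousLinearMap.star_eq_adjoint]
  symm
  rw [ContinuousLinearMap.eq_adjoint_iff]
  intro x y
  calc inner (𝕜 := ℂ) (leftReg g⁻¹ x) y
      = inner (𝕜 := ℂ) ((lpShift (Equiv.mulLeft g)) (leftReg g⁻¹ x))
          ((lpShift (Equiv.mulLeft g)) y) :=
        ((lpShift (Equiv.mulLeft g)).inner_map_map _ _).symm
    _ = inner (𝕜 := ℂ) x (leftReg g y) := by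
        have h : leftReg g (leftReg g⁻¹ x) = x := by
          show ((leftRegMonoidHom Γ) g * (leftRegMonoidHom Γ) g⁻¹) x = x
          rw [← (leftRegMonoidHom Γ).map_mul, mul_inv_cancel, (leftRegMonoidHom Γ).map_one,
            ContinuousLinearMap.one_apply]
        exact congrArg (fun w => inner (𝕜 := ℂ) w ((lpShift (Equiv.mulLeft g)) y)) h

lemma gaStar_single (g : Γ) (c : ℂ) :
    gaStar (MonoidAlgebra.single g c : MonoidAlgebra ℂ Γ)
      = MonoidAlgebra.single g⁻¹ (starRingEnd ℂ c) := by
  show MonoidAlgebra.ofCoeff (Finsupp.mapDomain _ (Finsupp.mapRange _ _ (Finsupp.single g c)))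
    = MonoidAlgebra.ofCoeff (Finsupp.single _ _)
  rw [Finsupp.mapRange_single, Finsupp.mapDomain_single]

lemma gaStar_add (a b : MonoidAlgebra ℂ Γ) : gaStar (a + b) = gaStar a + gaStar b := by
  show MonoidAlgebra.ofCoeff (Finsupp.mapDomain _ (Finsupp.mapRange _ _ (a.coeff + b.coeff))) = _
  rw [Finsupp.mapRange_add (fun x y => map_add (starRingEnd ℂ) x y), Finsupp.mapDomain_add]
  rfl

lemma gaStar_zero : gaStar (0 : MonoidAlgebra ℂ Γ) = 0 := by
  simp [gaStar]

lemma piRep_star (ht : ‖t‖ = 1) (a : MonoidAlgebra ℂ Γ) :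
    piRep hz hord ht (gaStar a) = star (piRep hz hord ht a) := by
  induction a using MonoidAlgebra.induction_linear with
  | zero => rw [gaStar_zero, map_zero, star_zero]
  | add f g hf hg => rw [gaStar_add, map_add, map_add, hf, hg, star_add]
  | single g c =>
      rw [gaStar_single]
      show piRep hz hord ht (MonoidAlgebra.single g⁻¹ (starRingEnd ℂ c))
        = star (piRep hz hord ht (MonoidAlgebra.single g c))
      rw [piRep, MonoidAlgebra.lift_single, MonoidAlgebra.lift_single, star_smul,
        piHom_star hz hord ht, RCLike.star_def]

lemma lam_star (a : MonoidAlgebra ℂ Γ) :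
    lam Γ (gaStar a) = star (lam Γ a) := by
  induction a using MonoidAlgebra.induction_linear with
  | zero => rw [gaStar_zero, map_zero, star_zero]
  | add f g hf hg => rw [gaStar_add, map_add, map_add, hf, hg, star_add]
  | single g c =>
      rw [gaStar_single]
      show lam Γ (MonoidAlgebra.single g⁻¹ (starRingEnd ℂ c))
        = star (lam Γ (MonoidAlgebra.single g c))
      rw [lam, MonoidAlgebra.lift_single, MonoidAlgebra.lift_single, star_smul,
        RCLike.star_def]
      congr 1
      exact (leftReg_star g).symm

end CstarProof

-- Part 3: the norm estimate ‖piRep a‖ ≤ ‖lam a‖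
namespace CstarProof

open GroupCstar ContinuousLinearMap Finset Filter
open scoped InnerProductSpace ComplexConjugate Classical Topology

variable {Γ : Type*} [Group Γ]
variable {z : Γ} (hz : z ∈ Subgroup.center Γ) (hord : ¬ IsOfFinOrder z)
variable {t : ℂ}

lemma inner_single_single {α : Type*} [DecidableEq α] (i j : α) (a b : ℂ) :
    inner (𝕜 := ℂ) (lp.single 2 i a : l2 α) (lp.single 2 j b : l2 α)
      = if i = j then (starRingEnd ℂ) a * b else 0 := by
  rw [lp.inner_single_left]
  by_cases h : i = j
  · subst h
    rw [lp.single_apply_self, if_pos rfl, RCLike.inner_apply, mul_comm]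
  · rw [lp.single_apply_ne _ _ _ h, if_neg h, RCLike.inner_apply, zero_mul]

lemma conj_zpow (ht : ‖t‖ = 1) (m : ℤ) : (starRingEnd ℂ) (t ^ m) = t ^ (-m) := by
  have h2 : t * (starRingEnd ℂ) t = 1 := by
    rw [Complex.mul_conj, Complex.normSq_eq_norm_sq, ht]
    norm_num
  have h1 : (starRingEnd ℂ) t = t⁻¹ := eq_inv_of_mul_eq_one_right h2
  rw [map_zpow₀, h1, inv_zpow, zpow_neg]

/-- finite-support test vector in `ℓ²(Q)`. -/
def Xi (s : Finset (Qt z)) (v : Qt z → ℂ) : l2 (Qt z) :=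
  ∑ q ∈ s, lp.single 2 q (v q)

/-- unnormalized Følner-smeared lift of `Xi` to `ℓ²(Γ)`. -/
def Wv (t : ℂ) (n : ℕ) (s : Finset (Qt z)) (v : Qt z → ℂ) : l2 Γ :=
  ∑ q ∈ s, ∑ k ∈ Finset.Icc (-(n : ℤ)) (n : ℤ), lp.single 2 (z ^ k * sec z q) (t ^ (-k) * v q)

/-- the window-overlap count. -/
def cnt (n : ℕ) (m : ℤ) : ℕ :=
  ((Finset.Icc (-(n : ℤ)) (n : ℤ)).filter
    (fun k => k + m ∈ Finset.Icc (-(n : ℤ)) (n : ℤ))).card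

lemma cnt_eq (n : ℕ) (m : ℤ) : (cnt n m : ℤ) = max 0 (2 * n + 1 - |m|) := by
  have h : ((Finset.Icc (-(n : ℤ)) (n : ℤ)).filter
      (fun k => k + m ∈ Finset.Icc (-(n : ℤ)) (n : ℤ)))
      = Finset.Icc (max (-(n : ℤ)) (-(n : ℤ) - m)) (min (n : ℤ) ((n : ℤ) - m)) := by
    ext k
    simp only [Finset.mem_filter, Finset.mem_Icc, le_min_iff, max_le_iff]
    omega
  rw [cnt, h, Int.card_Icc]
  rw [Int.abs_eq_natAbs]
  omega

lemma cnt_zero (n : ℕ) : cnt n 0 = 2 * n + 1 := by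
  have h := cnt_eq n 0
  rw [abs_zero] at h
  omega

include hz hord in
lemma inner_Xi_piHom (ht : ‖t‖ = 1) (s : Finset (Qt z)) (v : Qt z → ℂ) (γ : Γ) :
    inner (𝕜 := ℂ) (Xi s v) (piHom hz hord ht γ (Xi s v))
      = ∑ q' ∈ s, ∑ q ∈ s,
          (if q' = γ • q then (starRingEnd ℂ) (v q') * (t ^ omg z γ q * v q) else 0) := by
  rw [Xi, map_sum, sum_inner]
  refine Finset.sum_congr rfl fun q' _ => ?_
  rw [inner_sum]
  refine Finset.sum_congr rfl fun q _ => ?_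
  rw [piHom_single hz hord ht]
  exact inner_single_single q' (γ • q) (v q') (t ^ omg z γ q * v q)

include hz hord in
lemma leftReg_zpow_single (ht : ‖t‖ = 1) (γ : Γ) (q : Qt z) (k : ℤ) (c : ℂ) :
    leftReg γ (lp.single 2 (z ^ k * sec z q) c)
      = lp.single 2 (z ^ (k + omg z γ q) * sec z (γ • q)) c := by
  rw [leftReg_single]
  congr 1
  rw [← mul_assoc, zpow_comm hz γ k, mul_assoc, omg_spec hz γ q, ← mul_assoc, ← zpow_add]

include hz hord in
lemma pair_term (ht : ‖t‖ = 1) (n : ℕ) (v : Qt z → ℂ) (γ : Γ) (q q' : Qt z) :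
    inner (𝕜 := ℂ)
        (∑ j ∈ Finset.Icc (-(n : ℤ)) (n : ℤ), lp.single 2 (z ^ j * sec z q') (t ^ (-j) * v q'))
        (leftReg γ (∑ k ∈ Finset.Icc (-(n : ℤ)) (n : ℤ),
          lp.single 2 (z ^ k * sec z q) (t ^ (-k) * v q)))
      = if q' = γ • q then
          (cnt n (omg z γ q) : ℂ) * ((starRingEnd ℂ) (v q') * (t ^ omg z γ q * v q))
        else 0 := by
  rw [map_sum]
  have step1 : inner (𝕜 := ℂ)
        (∑ j ∈ Finset.Icc (-(n : ℤ)) (n : ℤ), lp.single 2 (z ^ j * sec z q') (t ^ (-j) * v q'))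
        (∑ k ∈ Finset.Icc (-(n : ℤ)) (n : ℤ),
          leftReg γ (lp.single 2 (z ^ k * sec z q) (t ^ (-k) * v q)))
      = ∑ j ∈ Finset.Icc (-(n : ℤ)) (n : ℤ), ∑ k ∈ Finset.Icc (-(n : ℤ)) (n : ℤ),
          (if z ^ j * sec z q' = z ^ (k + omg z γ q) * sec z (γ • q) then
            (starRingEnd ℂ) (t ^ (-j) * v q') * (t ^ (-k) * v q) else 0) := by
    rw [sum_inner]
    refine Finset.sum_congr rfl fun j _ => ?_
    rw [inner_sum]
    refine Finset.sum_congr rfl fun k _ => ?_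
    rw [leftReg_zpow_single hz hord ht]
    exact inner_single_single _ _ _ _
  rw [step1]
  by_cases hq : q' = γ • q
  · subst hq
    have hcond : ∀ j k : ℤ,
        (z ^ j * sec z (γ • q) = z ^ (k + omg z γ q) * sec z (γ • q)) ↔ j = k + omg z γ q :=
      fun j k => ⟨fun h => (decomp_inj hz hord h).1, fun h => by rw [h]⟩
    rw [if_pos rfl]
    calc ∑ j ∈ Finset.Icc (-(n : ℤ)) (n : ℤ), ∑ k ∈ Finset.Icc (-(n : ℤ)) (n : ℤ),
            (if z ^ j * sec z (γ • q) = z ^ (k + omg z γ q) * sec z (γ • q) then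
              (starRingEnd ℂ) (t ^ (-j) * v (γ • q)) * (t ^ (-k) * v q) else 0)
        = ∑ j ∈ Finset.Icc (-(n : ℤ)) (n : ℤ), ∑ k ∈ Finset.Icc (-(n : ℤ)) (n : ℤ),
            (if j = k + omg z γ q then
              (starRingEnd ℂ) (t ^ (-j) * v (γ • q)) * (t ^ (-k) * v q) else 0) := by
          exact Finset.sum_congr rfl fun j _ => Finset.sum_congr rfl fun k _ => by
            rw [if_congr (hcond j k) rfl rfl]
      _ = ∑ k ∈ Finset.Icc (-(n : ℤ)) (n : ℤ), ∑ j ∈ Finset.Icc (-(n : ℤ)) (n : ℤ),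
            (if j = k + omg z γ q then
              (starRingEnd ℂ) (t ^ (-j) * v (γ • q)) * (t ^ (-k) * v q) else 0) :=
          Finset.sum_comm
      _ = ∑ k ∈ Finset.Icc (-(n : ℤ)) (n : ℤ),
            (if k + omg z γ q ∈ Finset.Icc (-(n : ℤ)) (n : ℤ) then
              (starRingEnd ℂ) (t ^ (-(k + omg z γ q)) * v (γ • q)) * (t ^ (-k) * v q)
            else 0) := by
          refine Finset.sum_congr rfl fun k _ => ?_
          exact Finset.sum_ite_eq' _ _ _
      _ = ∑ k ∈ Finset.Icc (-(n : ℤ)) (n : ℤ),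
            (if k + omg z γ q ∈ Finset.Icc (-(n : ℤ)) (n : ℤ) then
              (starRingEnd ℂ) (v (γ • q)) * (t ^ omg z γ q * v q)
            else 0) := by
          have hsc : ∀ k : ℤ,
              (starRingEnd ℂ) (t ^ (-(k + omg z γ q)) * v (γ • q)) * (t ^ (-k) * v q)
                = (starRingEnd ℂ) (v (γ • q)) * (t ^ omg z γ q * v q) := by
            intro k
            have he : k + omg z γ q + -k = omg z γ q := by ring
            calc (starRingEnd ℂ) (t ^ (-(k + omg z γ q)) * v (γ • q)) * (t ^ (-k) * v q)
                = (t ^ (k + omg z γ q) * (starRingEnd ℂ) (v (γ • q))) * (t ^ (-k) * v q) := by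
                  rw [map_mul, conj_zpow ht, neg_neg]
              _ = (t ^ (k + omg z γ q) * t ^ (-k)) * ((starRingEnd ℂ) (v (γ • q)) * v q) := by
                  ring
              _ = t ^ omg z γ q * ((starRingEnd ℂ) (v (γ • q)) * v q) := by
                  rw [← zpow_add₀ (tne ht), he]
              _ = (starRingEnd ℂ) (v (γ • q)) * (t ^ omg z γ q * v q) := by ring
          refine Finset.sum_congr rfl fun k _ => ?_
          rw [hsc k]
      _ = ((Finset.Icc (-(n : ℤ)) (n : ℤ)).filter
            (fun k => k + omg z γ q ∈ Finset.Icc (-(n : ℤ)) (n : ℤ))).card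
            • ((starRingEnd ℂ) (v (γ • q)) * (t ^ omg z γ q * v q)) := by
          rw [← Finset.sum_filter, Finset.sum_const]
      _ = (cnt n (omg z γ q) : ℂ) * ((starRingEnd ℂ) (v (γ • q)) * (t ^ omg z γ q * v q)) := by
          rw [cnt, nsmul_eq_mul]
  · rw [if_neg hq]
    refine Finset.sum_eq_zero fun j _ => Finset.sum_eq_zero fun k _ => ?_
    rw [if_neg]
    intro h
    exact hq (decomp_inj hz hord h).2

end CstarProof

-- Part 3b: assembling the estimate
namespace CstarProof

open GroupCstar ContinuousLinearMap Finset Filter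
open scoped InnerProductSpace ComplexConjugate Classical Topology

variable {Γ : Type*} [Group Γ]
variable {z : Γ} (hz : z ∈ Subgroup.center Γ) (hord : ¬ IsOfFinOrder z)
variable {t : ℂ}

include hz hord in
lemma inner_Wv_leftReg (ht : ‖t‖ = 1) (n : ℕ) (s : Finset (Qt z)) (v : Qt z → ℂ) (γ : Γ) :
    inner (𝕜 := ℂ) (Wv t n s v) (leftReg γ (Wv t n s v))
      = ∑ q' ∈ s, ∑ q ∈ s,
          (if q' = γ • q then
            (cnt n (omg z γ q) : ℂ) * ((starRingEnd ℂ) (v q') * (t ^ omg z γ q * v q))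
          else 0) := by
  rw [Wv, map_sum, sum_inner]
  refine Finset.sum_congr rfl fun q' _ => ?_
  rw [inner_sum]
  refine Finset.sum_congr rfl fun q _ => ?_
  exact pair_term hz hord ht n v γ q q'

include hz hord in
lemma inner_Xi_Xi (ht : ‖t‖ = 1) (s : Finset (Qt z)) (v : Qt z → ℂ) :
    inner (𝕜 := ℂ) (Xi s v) (Xi s v)
      = ∑ q' ∈ s, ∑ q ∈ s,
          (if q' = (1 : Γ) • q then
            (starRingEnd ℂ) (v q') * (t ^ omg z (1 : Γ) q * v q) else 0) := by
  have h2 := inner_Xi_piHom hz hord ht s v 1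
  have e2 : piHom hz hord ht (1 : Γ) = 1 := (piHom hz hord ht).map_one
  rw [e2, ContinuousLinearMap.one_apply] at h2
  exact h2

include hz hord in
lemma inner_Wv_Wv (ht : ‖t‖ = 1) (n : ℕ) (s : Finset (Qt z)) (v : Qt z → ℂ) :
    inner (𝕜 := ℂ) (Wv t n s v) (Wv t n s v)
      = ((2 * n + 1 : ℕ) : ℂ) * inner (𝕜 := ℂ) (Xi s v) (Xi s v) := by
  have h1 := inner_Wv_leftReg hz hord ht n s v 1
  have e1 : leftReg (1 : Γ) = (1 : B Γ) := (leftRegMonoidHom Γ).map_one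
  rw [e1, ContinuousLinearMap.one_apply] at h1
  rw [h1, inner_Xi_Xi hz hord ht s v, Finset.mul_sum]
  refine Finset.sum_congr rfl fun q' _ => ?_
  rw [Finset.mul_sum]
  refine Finset.sum_congr rfl fun q _ => ?_
  rw [omg_one hz hord, cnt_zero, mul_ite, mul_zero]

lemma lam_eq_sum (a : MonoidAlgebra ℂ Γ) :
    lam Γ a = ∑ γ ∈ a.coeff.support, a.coeff γ • leftReg γ := by
  rw [lam, MonoidAlgebra.lift_apply, Finsupp.sum]
  rfl

lemma piRep_eq_sum (ht : ‖t‖ = 1) (a : MonoidAlgebra ℂ Γ) :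
    piRep hz hord ht a = ∑ γ ∈ a.coeff.support, a.coeff γ • piHom hz hord ht γ := by
  rw [piRep, MonoidAlgebra.lift_apply, Finsupp.sum]

include hz hord in
lemma inner_Wv_lam (ht : ‖t‖ = 1) (n : ℕ) (s : Finset (Qt z)) (v : Qt z → ℂ)
    (a : MonoidAlgebra ℂ Γ) :
    inner (𝕜 := ℂ) (Wv t n s v) (lam Γ a (Wv t n s v))
      = ∑ γ ∈ a.coeff.support, ∑ q' ∈ s, ∑ q ∈ s,
          (if q' = γ • q then
            a.coeff γ * ((cnt n (omg z γ q) : ℂ)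
              * ((starRingEnd ℂ) (v q') * (t ^ omg z γ q * v q)))
          else 0) := by
  rw [lam_eq_sum, ContinuousLinearMap.sum_apply, inner_sum]
  refine Finset.sum_congr rfl fun γ _ => ?_
  rw [ContinuousLinearMap.smul_apply, inner_smul_right, inner_Wv_leftReg hz hord ht,
    Finset.mul_sum]
  refine Finset.sum_congr rfl fun q' _ => ?_
  rw [Finset.mul_sum]
  refine Finset.sum_congr rfl fun q _ => ?_
  rw [mul_ite, mul_zero]

include hz hord in
lemma inner_Xi_piRep (ht : ‖t‖ = 1) (s : Finset (Qt z)) (v : Qt z → ℂ)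
    (a : MonoidAlgebra ℂ Γ) :
    inner (𝕜 := ℂ) (Xi s v) (piRep hz hord ht a (Xi s v))
      = ∑ γ ∈ a.coeff.support, ∑ q' ∈ s, ∑ q ∈ s,
          (if q' = γ • q then
            a.coeff γ * ((starRingEnd ℂ) (v q') * (t ^ omg z γ q * v q))
          else 0) := by
  rw [piRep_eq_sum hz hord ht, ContinuousLinearMap.sum_apply, inner_sum]
  refine Finset.sum_congr rfl fun γ _ => ?_
  rw [ContinuousLinearMap.smul_apply, inner_smul_right, inner_Xi_piHom hz hord ht,
    Finset.mul_sum]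
  refine Finset.sum_congr rfl fun q' _ => ?_
  rw [Finset.mul_sum]
  refine Finset.sum_congr rfl fun q _ => ?_
  rw [mul_ite, mul_zero]

lemma cnt_tendsto (m : ℤ) :
    Tendsto (fun n : ℕ => ((cnt n m : ℝ) / ((2 * n + 1 : ℕ) : ℝ))) atTop (𝓝 1) := by
  have hev : ∀ᶠ n : ℕ in atTop,
      ((cnt n m : ℝ) / ((2 * n + 1 : ℕ) : ℝ))
        = 1 - (m.natAbs : ℝ) / ((2 * n + 1 : ℕ) : ℝ) := by
    filter_upwards [eventually_ge_atTop m.natAbs] with n hn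
    have hc : (cnt n m : ℤ) = 2 * n + 1 - m.natAbs := by
      have h := cnt_eq n m
      rw [Int.abs_eq_natAbs] at h
      omega
    have hpos : ((2 * n + 1 : ℕ) : ℝ) ≠ 0 := by positivity
    have hcr : (cnt n m : ℝ) = ((2 * n + 1 : ℕ) : ℝ) - (m.natAbs : ℝ) := by
      exact_mod_cast hc
    rw [hcr, sub_div, div_self hpos]
  rw [tendsto_congr' hev]
  have hmono : Tendsto (fun n : ℕ => 2 * n + 1) atTop atTop :=
    tendsto_atTop_mono (f := fun n : ℕ => n) (g := fun n : ℕ => 2 * n + 1)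
      (fun n => (by omega : n ≤ 2 * n + 1)) tendsto_id
  have h2 : Tendsto (fun n : ℕ => ((2 * n + 1 : ℕ) : ℝ)) atTop atTop :=
    tendsto_natCast_atTop_atTop.comp hmono
  have h3 : Tendsto (fun n : ℕ => (m.natAbs : ℝ) / ((2 * n + 1 : ℕ) : ℝ)) atTop (𝓝 0) :=
    tendsto_const_nhds.div_atTop h2
  have h4 := tendsto_const_nhds.sub h3 (f := fun _ : ℕ => (1 : ℝ))
  simpa using h4

lemma cnt_tendsto_c (m : ℤ) :
    Tendsto (fun n : ℕ => (((2 * n + 1 : ℕ) : ℂ)⁻¹ * (cnt n m : ℂ))) atTop (𝓝 1) := by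
  have h : Tendsto (fun n : ℕ => (((cnt n m : ℝ) / ((2 * n + 1 : ℕ) : ℝ) : ℝ) : ℂ))
      atTop (𝓝 ((1 : ℝ) : ℂ)) :=
    (Complex.continuous_ofReal.tendsto 1).comp (cnt_tendsto m)
  have he : (fun n : ℕ => (((cnt n m : ℝ) / ((2 * n + 1 : ℕ) : ℝ) : ℝ) : ℂ))
      = fun n : ℕ => (((2 * n + 1 : ℕ) : ℂ)⁻¹ * (cnt n m : ℂ)) := by
    funext n
    push_cast
    ring
  rw [he] at h
  simpa using h

include hz hord in
lemma inner_tendsto (ht : ‖t‖ = 1) (s : Finset (Qt z)) (v : Qt z → ℂ)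
    (a : MonoidAlgebra ℂ Γ) :
    Tendsto (fun n : ℕ =>
        ((2 * n + 1 : ℕ) : ℂ)⁻¹ * inner (𝕜 := ℂ) (Wv t n s v) (lam Γ a (Wv t n s v)))
      atTop (𝓝 (inner (𝕜 := ℂ) (Xi s v) (piRep hz hord ht a (Xi s v)))) := by
  have he : (fun n : ℕ =>
      ((2 * n + 1 : ℕ) : ℂ)⁻¹ * inner (𝕜 := ℂ) (Wv t n s v) (lam Γ a (Wv t n s v)))
      = fun n : ℕ => ∑ γ ∈ a.coeff.support, ∑ q' ∈ s, ∑ q ∈ s,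
          (if q' = γ • q then
            (((2 * n + 1 : ℕ) : ℂ)⁻¹ * (cnt n (omg z γ q) : ℂ))
              * (a.coeff γ * ((starRingEnd ℂ) (v q') * (t ^ omg z γ q * v q)))
          else 0) := by
    funext n
    rw [inner_Wv_lam hz hord ht n s v a, Finset.mul_sum]
    refine Finset.sum_congr rfl fun γ _ => ?_
    rw [Finset.mul_sum]
    refine Finset.sum_congr rfl fun q' _ => ?_
    rw [Finset.mul_sum]
    refine Finset.sum_congr rfl fun q _ => ?_
    rw [mul_ite, mul_zero]
    by_cases hcond : q' = γ • q
    · rw [if_pos hcond, if_pos hcond]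
      ring
    · rw [if_neg hcond, if_neg hcond]
  rw [he, inner_Xi_piRep hz hord ht s v a]
  refine tendsto_finset_sum _ fun γ _ => ?_
  refine tendsto_finset_sum _ fun q' _ => ?_
  refine tendsto_finset_sum _ fun q _ => ?_
  by_cases hcond : q' = γ • q
  · simp only [if_pos hcond]
    have := (cnt_tendsto_c (omg z γ q)).mul_const
      (a.coeff γ * ((starRingEnd ℂ) (v q') * (t ^ omg z γ q * v q)))
    simpa using this
  · simp only [if_neg hcond]
    exact tendsto_const_nhds

include hz hord in
lemma inner_bound (ht : ‖t‖ = 1) (s : Finset (Qt z)) (v : Qt z → ℂ)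
    (a : MonoidAlgebra ℂ Γ) :
    ‖inner (𝕜 := ℂ) (Xi s v) (piRep hz hord ht a (Xi s v))‖
      ≤ ‖lam Γ a‖ * ‖Xi s v‖ ^ 2 := by
  have hW : ∀ n : ℕ, ‖Wv t n s v‖ ^ 2 = ((2 * n + 1 : ℕ) : ℝ) * ‖Xi s v‖ ^ 2 := by
    intro n
    have h := inner_Wv_Wv hz hord ht n s v
    rw [inner_self_eq_norm_sq_to_K, inner_self_eq_norm_sq_to_K] at h
    apply Complex.ofReal_injective
    push_cast at h ⊢
    exact h
  refine le_of_tendsto (inner_tendsto hz hord ht s v a).norm ?_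
  filter_upwards with n
  have hb : ‖inner (𝕜 := ℂ) (Wv t n s v) (lam Γ a (Wv t n s v))‖
      ≤ ‖lam Γ a‖ * ‖Wv t n s v‖ ^ 2 := by
    calc ‖inner (𝕜 := ℂ) (Wv t n s v) (lam Γ a (Wv t n s v))‖
        ≤ ‖Wv t n s v‖ * ‖lam Γ a (Wv t n s v)‖ := norm_inner_le_norm _ _
      _ ≤ ‖Wv t n s v‖ * (‖lam Γ a‖ * ‖Wv t n s v‖) := by
          have := (lam Γ a).le_opNorm (Wv t n s v)
          exact mul_le_mul_of_nonneg_left this (norm_nonneg _)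
      _ = ‖lam Γ a‖ * ‖Wv t n s v‖ ^ 2 := by ring
  rw [norm_mul, norm_inv, Complex.norm_natCast]
  have hpos : (0 : ℝ) < ((2 * n + 1 : ℕ) : ℝ) := by positivity
  rw [hW n] at hb
  calc ((2 * n + 1 : ℕ) : ℝ)⁻¹ * ‖inner (𝕜 := ℂ) (Wv t n s v) (lam Γ a (Wv t n s v))‖
      ≤ ((2 * n + 1 : ℕ) : ℝ)⁻¹ * (‖lam Γ a‖ * (((2 * n + 1 : ℕ) : ℝ) * ‖Xi s v‖ ^ 2)) := by
        exact mul_le_mul_of_nonneg_left hb (by positivity)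
    _ = ‖lam Γ a‖ * ‖Xi s v‖ ^ 2 := by
        field_simp

include hz hord in
lemma piRep_apply_norm_le (ht : ‖t‖ = 1) (a : MonoidAlgebra ℂ Γ)
    (s : Finset (Qt z)) (v : Qt z → ℂ) :
    ‖piRep hz hord ht a (Xi s v)‖ ≤ ‖lam Γ a‖ * ‖Xi s v‖ := by
  have key : ‖piRep hz hord ht a (Xi s v)‖ ^ 2 ≤ (‖lam Γ a‖ * ‖Xi s v‖) ^ 2 := by
    have h1 : inner (𝕜 := ℂ) (piRep hz hord ht a (Xi s v)) (piRep hz hord ht a (Xi s v))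
        = inner (𝕜 := ℂ) (Xi s v) (piRep hz hord ht (gaStar a * a) (Xi s v)) := by
      have e : piRep hz hord ht (gaStar a * a)
          = star (piRep hz hord ht a) * piRep hz hord ht a := by
        rw [map_mul, piRep_star hz hord ht]
      rw [e, ContinuousLinearMap.mul_apply,
        ContinuousLinearMap.star_eq_adjoint (piRep hz hord ht a)]
      exact (ContinuousLinearMap.adjoint_inner_right (piRep hz hord ht a) (Xi s v)
        (piRep hz hord ht a (Xi s v))).symm
    have h2 : ‖piRep hz hord ht a (Xi s v)‖ ^ 2
        = ‖inner (𝕜 := ℂ) (Xi s v) (piRep hz hord ht (gaStar a * a) (Xi s v))‖ := by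
      rw [← h1, inner_self_eq_norm_sq_to_K]
      rw [norm_pow, RCLike.norm_ofReal, abs_of_nonneg (norm_nonneg _)]
    rw [h2]
    calc ‖inner (𝕜 := ℂ) (Xi s v) (piRep hz hord ht (gaStar a * a) (Xi s v))‖
        ≤ ‖lam Γ (gaStar a * a)‖ * ‖Xi s v‖ ^ 2 := inner_bound hz hord ht s v _
      _ ≤ ‖lam Γ a‖ ^ 2 * ‖Xi s v‖ ^ 2 := by
          have hmul : ‖lam Γ (gaStar a * a)‖ ≤ ‖lam Γ a‖ ^ 2 := by
            rw [map_mul, lam_star]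
            have hsn : ‖star (lam Γ a)‖ = ‖lam Γ a‖ := by
              rw [ContinuousLinearMap.star_eq_adjoint (lam Γ a)]
              exact LinearIsometryEquiv.norm_map ContinuousLinearMap.adjoint (lam Γ a)
            calc ‖star (lam Γ a) * lam Γ a‖ ≤ ‖star (lam Γ a)‖ * ‖lam Γ a‖ := norm_mul_le _ _
              _ = ‖lam Γ a‖ ^ 2 := by rw [hsn]; ring
          exact mul_le_mul_of_nonneg_right hmul (by positivity)
      _ = (‖lam Γ a‖ * ‖Xi s v‖) ^ 2 := by ring
  have h3 := Real.sqrt_le_sqrt key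
  rwa [Real.sqrt_sq (norm_nonneg _), Real.sqrt_sq (by positivity)] at h3

include hz hord in
lemma piRep_norm_le (ht : ‖t‖ = 1) (a : MonoidAlgebra ℂ Γ) :
    ‖piRep hz hord ht a‖ ≤ ‖lam Γ a‖ := by
  refine ContinuousLinearMap.opNorm_le_bound _ (norm_nonneg _) fun f => ?_
  have hsum : HasSum (fun q : Qt z => lp.single 2 q (f q)) f :=
    lp.hasSum_single (by norm_num) f
  have h1 : Tendsto (fun S : Finset (Qt z) => Xi S (fun q => f q)) atTop (𝓝 f) := hsum
  have h2 : Tendsto (fun S : Finset (Qt z) => ‖piRep hz hord ht a (Xi S (fun q => f q))‖)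
      atTop (𝓝 ‖piRep hz hord ht a f‖) :=
    (((piRep hz hord ht a).continuous.tendsto f).comp h1).norm
  have h3 : Tendsto (fun S : Finset (Qt z) => ‖lam Γ a‖ * ‖Xi S (fun q => f q)‖)
      atTop (𝓝 (‖lam Γ a‖ * ‖f‖)) :=
    h1.norm.const_mul _
  exact le_of_tendsto_of_tendsto' h2 h3 fun S => piRep_apply_norm_le hz hord ht a S _

end CstarProof

-- Part 4: points on the circle and faithfulness
namespace CstarProof

open GroupCstar ContinuousLinearMap Finset Filter
open scoped InnerProductSpace ComplexConjugate Classical Topology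

variable {Γ : Type*} [Group Γ]
variable {z : Γ} (hz : z ∈ Subgroup.center Γ) (hord : ¬ IsOfFinOrder z)
variable {t : ℂ}

/-- rational parametrization points. -/
def xx (j : ℕ) : ℝ := ((j : ℝ) + 2)⁻¹

lemma xx_pos (j : ℕ) : 0 < xx j := by
  have : (0 : ℝ) < (j : ℝ) + 2 := by positivity
  exact inv_pos.mpr this

lemma xx_le (j : ℕ) : xx j ≤ 2⁻¹ := by
  have h2 : (0 : ℝ) < 2 := two_pos
  have h : (2 : ℝ) ≤ (j : ℝ) + 2 := by
    have : (0 : ℝ) ≤ (j : ℝ) := Nat.cast_nonneg j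
    linarith
  exact inv_anti₀ h2 h

lemma xx_inj : Function.Injective xx := by
  intro j j' h
  have h1 : (j : ℝ) + 2 = (j' : ℝ) + 2 := by
    have := inv_injective h
    exact this
  have : (j : ℝ) = (j' : ℝ) := by linarith
  exact_mod_cast this

/-- infinitely many points on the left half of the unit circle. -/
def TT (j : ℕ) : ℂ := ⟨(xx j ^ 2 - 1) / (xx j ^ 2 + 1), 2 * xx j / (xx j ^ 2 + 1)⟩

lemma TT_normSq (j : ℕ) : Complex.normSq (TT j) = 1 := by
  have hd : xx j ^ 2 + 1 ≠ 0 := by positivity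
  rw [TT, Complex.normSq_mk]
  field_simp
  ring

lemma TT_norm (j : ℕ) : ‖TT j‖ = 1 := by
  rw [Complex.norm_def, TT_normSq, Real.sqrt_one]

lemma TT_re_nonpos (j : ℕ) : (TT j).re ≤ 0 := by
  have hd : (0 : ℝ) < xx j ^ 2 + 1 := by positivity
  have hle := xx_le j
  have h0 := xx_pos j
  have hnum : xx j ^ 2 - 1 ≤ 0 := by nlinarith
  exact div_nonpos_iff.mpr (Or.inr ⟨hnum, le_of_lt hd⟩)

lemma TT_inj : Function.Injective TT := by
  intro j j' h
  apply xx_inj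
  have him : 2 * xx j / (xx j ^ 2 + 1) = 2 * xx j' / (xx j' ^ 2 + 1) :=
    congrArg Complex.im h
  have hd : xx j ^ 2 + 1 ≠ 0 := by positivity
  have hd' : xx j' ^ 2 + 1 ≠ 0 := by positivity
  have him2 : 2 * xx j * (xx j' ^ 2 + 1) = 2 * xx j' * (xx j ^ 2 + 1) :=
    (div_eq_div_iff hd hd').mp him
  have hfac : (xx j - xx j') * (1 - xx j * xx j') = 0 := by linear_combination him2 / 2
  have h0 := xx_pos j
  have h0' := xx_pos j'
  have hle := xx_le j
  have hle' := xx_le j'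
  have hne : 1 - xx j * xx j' ≠ 0 := by nlinarith
  rcases mul_eq_zero.mp hfac with hcase | hcase
  · linarith
  · exact absurd hcase hne

include hz hord in
lemma inner_single_piRep (ht : ‖t‖ = 1) (a : MonoidAlgebra ℂ Γ) (q0 q' : Qt z) :
    inner (𝕜 := ℂ) (lp.single 2 q' (1 : ℂ) : l2 (Qt z))
        (piRep hz hord ht a (lp.single 2 q0 (1 : ℂ)))
      = ∑ γ ∈ a.coeff.support, (if q' = γ • q0 then a.coeff γ * t ^ omg z γ q0 else 0) := by
  rw [piRep_eq_sum hz hord ht, ContinuousLinearMap.sum_apply, inner_sum]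
  refine Finset.sum_congr rfl fun γ _ => ?_
  rw [ContinuousLinearMap.smul_apply, inner_smul_right, piHom_single hz hord ht,
    inner_single_single, mul_ite, mul_zero]
  by_cases h : q' = γ • q0
  · rw [if_pos h, if_pos h, map_one, one_mul, mul_one]
  · rw [if_neg h, if_neg h]

include hz hord in
lemma piRep_faithful (a : MonoidAlgebra ℂ Γ)
    (h : ∀ j : ℕ, piRep hz hord (TT_norm j) a = 0) : a = 0 := by
  ext γ0
  rw [MonoidAlgebra.coeff_zero, Finsupp.coe_zero, Pi.zero_apply]
  by_contra hne
  set q0 : Qt z := ((1 : Γ) : Qt z) with hq0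
  set q' : Qt z := γ0 • q0 with hq'
  set S : Finset Γ := a.coeff.support.filter (fun γ => q' = γ • q0) with hS
  set M : ℕ := S.sup (fun γ => (omg z γ q0).natAbs) with hM
  have hMγ : ∀ γ ∈ S, 0 ≤ omg z γ q0 + M := by
    intro γ hγ
    have h1 : (omg z γ q0).natAbs ≤ M := Finset.le_sup (f := fun γ => (omg z γ q0).natAbs) hγ
    omega
  set P : Polynomial ℂ :=
    ∑ γ ∈ S, Polynomial.C (a.coeff γ) * Polynomial.X ^ ((omg z γ q0 + M).toNat) with hP
  have hroot : ∀ j : ℕ, P.IsRoot (TT j) := by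
    intro j
    have h0 := inner_single_piRep hz hord (TT_norm j) a q0 q'
    rw [h j, ContinuousLinearMap.zero_apply, inner_zero_right] at h0
    have hsum : ∑ γ ∈ S, a.coeff γ * (TT j) ^ omg z γ q0 = 0 := by
      rw [hS, Finset.sum_filter]
      exact h0.symm
    have heval : P.eval (TT j)
        = (∑ γ ∈ S, a.coeff γ * (TT j) ^ omg z γ q0) * (TT j) ^ (M : ℤ) := by
      rw [hP, Polynomial.eval_finset_sum, Finset.sum_mul]
      refine Finset.sum_congr rfl fun γ hγ => ?_
      rw [Polynomial.eval_mul, Polynomial.eval_C, Polynomial.eval_pow, Polynomial.eval_X]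
      rw [mul_assoc, ← zpow_add₀ (tne (TT_norm j)), ← zpow_natCast (TT j) ((omg z γ q0 + M).toNat),
        Int.toNat_of_nonneg (hMγ γ hγ)]
    rw [Polynomial.IsRoot, heval, hsum, zero_mul]
  have hPzero : P = 0 :=
    Polynomial.eq_zero_of_infinite_isRoot P
      (Set.infinite_of_injective_forall_mem TT_inj hroot)
  have hγ0S : γ0 ∈ S := by
    rw [hS, Finset.mem_filter]
    exact ⟨Finsupp.mem_support_iff.mpr hne, rfl⟩
  have hcoeff := congrArg (fun p : Polynomial ℂ => p.coeff ((omg z γ0 q0 + M).toNat)) hPzero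
  simp only [Polynomial.coeff_zero] at hcoeff
  rw [hP, Polynomial.finset_sum_coeff] at hcoeff
  have hterm : ∑ γ ∈ S, (Polynomial.C (a.coeff γ)
      * Polynomial.X ^ ((omg z γ q0 + M).toNat)).coeff ((omg z γ0 q0 + M).toNat) = a.coeff γ0 := by
    rw [Finset.sum_eq_single γ0]
    · rw [Polynomial.coeff_C_mul, Polynomial.coeff_X_pow, if_pos rfl, mul_one]
    · intro γ hγ hne'
      rw [Polynomial.coeff_C_mul, Polynomial.coeff_X_pow]
      rw [if_neg, mul_zero]
      intro heq
      have heq2 : omg z γ0 q0 = omg z γ q0 := by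
        have h1 := hMγ γ hγ
        have h2 := hMγ γ0 hγ0S
        omega
      apply hne'
      have hc1 : q' = γ • q0 := (Finset.mem_filter.mp hγ).2
      have hc2 : γ * sec z q0 = γ0 * sec z q0 := by
        rw [omg_spec hz γ q0, omg_spec hz γ0 q0, ← hc1, ← hq', heq2]
      exact mul_right_cancel hc2
    · intro habs
      exact absurd hγ0S habs
  rw [hterm] at hcoeff
  exact hne hcoeff

end CstarProof

-- Part 5: the C*-norm and conclusion
namespace CstarProof

open GroupCstar ContinuousLinearMap Finset Filter
open scoped InnerProductSpace ComplexConjugate Classical Topology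

variable {Γ : Type*} [Group Γ]
variable {z : Γ} (hz : z ∈ Subgroup.center Γ) (hord : ¬ IsOfFinOrder z)
variable {t : ℂ}

lemma ciSup_sq (f : ℕ → ℝ) (h0 : ∀ j, 0 ≤ f j) (hb : BddAbove (Set.range f)) :
    (⨆ j, (f j) ^ 2) = (⨆ j, f j) ^ 2 := by
  obtain ⟨Mb, hMb⟩ := hb
  rw [mem_upperBounds] at hMb
  have hb' : BddAbove (Set.range f) := ⟨Mb, fun y hy => hMb y hy⟩
  have hb2 : BddAbove (Set.range fun j => (f j) ^ 2) := by
    refine ⟨Mb ^ 2, ?_⟩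
    rintro y ⟨j, rfl⟩
    show f j ^ 2 ≤ Mb ^ 2
    have h1 := hMb (f j) (Set.mem_range_self j)
    have h2 := h0 j
    nlinarith
  have h0S : 0 ≤ ⨆ i, f i := le_trans (h0 0) (le_ciSup hb' 0)
  apply le_antisymm
  · refine ciSup_le fun j => ?_
    exact pow_le_pow_left₀ (h0 j) (le_ciSup hb' j) 2
  · have h1 : (⨆ j, f j) ≤ Real.sqrt (⨆ j, (f j) ^ 2) := by
      refine ciSup_le fun j => ?_
      rw [show f j = Real.sqrt ((f j) ^ 2) from (Real.sqrt_sq (h0 j)).symm]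
      exact Real.sqrt_le_sqrt (le_ciSup hb2 j)
    have h2 : (0 : ℝ) ≤ ⨆ j, (f j) ^ 2 := le_trans (sq_nonneg (f 0)) (le_ciSup hb2 0)
    calc (⨆ j, f j) ^ 2 ≤ (Real.sqrt (⨆ j, (f j) ^ 2)) ^ 2 :=
          pow_le_pow_left₀ h0S h1 2
      _ = ⨆ j, (f j) ^ 2 := Real.sq_sqrt h2

include hz hord in
lemma z_smul_eq (q : Qt z) : z • q = q := by
  have := zpow_smul_eq hz (z := z) 1 q
  rwa [zpow_one] at this

include hz hord in
lemma piHom_z (ht : ‖t‖ = 1) : piHom hz hord ht z = t • (1 : l2 (Qt z) →L[ℂ] l2 (Qt z)) := by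
  ext f q
  show t ^ omg z z (z⁻¹ • q) * f (z⁻¹ • q) = (t • f) q
  have h1 : z⁻¹ • q = q := by
    have := zpow_smul_eq hz (z := z) (-1) q
    rwa [zpow_neg, zpow_one] at this
  rw [h1, omg_self hz hord, zpow_one, lp.coeFn_smul, Pi.smul_apply, smul_eq_mul]

instance : Nontrivial (l2 (Qt z)) := by
  refine ⟨lp.single 2 ((1 : Γ) : Qt z) (1 : ℂ), 0, fun h => ?_⟩
  have h2 : ((lp.single 2 ((1 : Γ) : Qt z) (1 : ℂ) : l2 (Qt z)) : ∀ _ : Qt z, ℂ) ((1 : Γ) : Qt z)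
      = ((0 : l2 (Qt z)) : ∀ _ : Qt z, ℂ) ((1 : Γ) : Qt z) := by rw [h]
  rw [lp.single_apply_self, lp.coeFn_zero, Pi.zero_apply] at h2
  exact one_ne_zero h2

include hz hord in
lemma piRep_a0_norm (ht : ‖t‖ = 1) :
    ‖piRep hz hord ht (1 + MonoidAlgebra.single z (1 : ℂ))‖ = ‖1 + t‖ := by
  have h1 : piRep hz hord ht (1 + MonoidAlgebra.single z (1 : ℂ))
      = (1 + t) • (1 : l2 (Qt z) →L[ℂ] l2 (Qt z)) := by
    rw [map_add, map_one, piRep, MonoidAlgebra.lift_single, piHom_z hz hord ht, one_smul,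
      add_smul, one_smul]
  rw [h1, norm_smul (1 + t) (1 : l2 (Qt z) →L[ℂ] l2 (Qt z)), ContinuousLinearMap.one_def,
    ContinuousLinearMap.norm_id, mul_one]

lemma norm_one_add_le (j : ℕ) : ‖1 + TT j‖ ≤ Real.sqrt 2 := by
  have hsq := TT_normSq j
  rw [Complex.normSq_apply] at hsq
  have h1 : ‖1 + TT j‖ ^ 2 = 2 + 2 * (TT j).re := by
    have he : ‖1 + TT j‖ ^ 2 = Complex.normSq (1 + TT j) := by
      rw [Complex.sq_norm]
    rw [he, Complex.normSq_apply, Complex.add_re, Complex.add_im, Complex.one_re,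
      Complex.one_im]
    linear_combination hsq
  have h2 := TT_re_nonpos j
  have h3 : ‖1 + TT j‖ ^ 2 ≤ 2 := by linarith
  nlinarith [Real.sq_sqrt (by norm_num : (0:ℝ) ≤ 2), Real.sqrt_nonneg 2,
    norm_nonneg (1 + TT j)]

end CstarProof

-- Part 6: conclusion
namespace CstarProof

open GroupCstar ContinuousLinearMap Finset Filter
open scoped InnerProductSpace ComplexConjugate Classical Topology

variable {Γ : Type*} [Group Γ]
variable {z : Γ} (hz : z ∈ Subgroup.center Γ) (hord : ¬ IsOfFinOrder z)
variable {t : ℂ}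

include hord in
lemma lam_a0_sq : Real.sqrt 6 ≤ ‖lam Γ (1 + MonoidAlgebra.single z (1 : ℂ))‖ ^ 2 := by
  have h1z : (1 : Γ) ≠ z := fun h => hord (h ▸ IsOfFinOrder.one)
  have h1zz : (1 : Γ) ≠ z * z := by
    intro h
    exact hord (isOfFinOrder_iff_pow_eq_one.mpr ⟨2, two_pos, by rw [pow_two]; exact h.symm⟩)
  have hzzz : z ≠ z * z := by
    intro h
    exact h1z (mul_left_cancel (a := z) (by rw [mul_one, ← h]))
  set A := lam Γ (1 + MonoidAlgebra.single z (1 : ℂ)) with hA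
  set δ : l2 Γ := lp.single 2 (1 : Γ) (1 : ℂ) with hδdef
  have hlam : A = 1 + leftReg z := by
    rw [hA, map_add, map_one, lam, MonoidAlgebra.lift_single, one_smul]
    rfl
  have hδ1 : A δ = δ + lp.single 2 z 1 := by
    rw [hlam, ContinuousLinearMap.add_apply, ContinuousLinearMap.one_apply, hδdef,
      leftReg_single, mul_one]
  have hw : A (A δ) = (lp.single 2 (1 : Γ) (1 : ℂ) + (2 : ℂ) • lp.single 2 z (1 : ℂ))
      + lp.single 2 (z * z) (1 : ℂ) := by
    rw [hδ1, map_add, hδ1, hlam, ContinuousLinearMap.add_apply,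
      ContinuousLinearMap.one_apply, leftReg_single, two_smul, hδdef]
    abel
  have hi : inner (𝕜 := ℂ) (A (A δ)) (A (A δ)) = (6 : ℂ) := by
    rw [hw]
    simp only [inner_add_left, inner_add_right, inner_smul_left, inner_smul_right,
      inner_single_single, if_pos rfl, if_neg h1z, if_neg h1zz, if_neg hzzz,
      if_neg (Ne.symm h1z), if_neg (Ne.symm h1zz), if_neg (Ne.symm hzzz)]
    simp only [map_one, mul_one, one_mul, mul_zero, zero_mul, add_zero, zero_add]
    have h2c : (starRingEnd ℂ) 2 = 2 := by
      rw [show ((2 : ℂ)) = ((2 : ℝ) : ℂ) by norm_num, Complex.conj_ofReal]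
    rw [h2c]
    norm_num
  rw [inner_self_eq_norm_sq_to_K] at hi
  have hwnorm : ‖A (A δ)‖ ^ 2 = 6 := by
    apply Complex.ofReal_injective
    push_cast at hi ⊢
    exact hi
  have hnorm : ‖A (A δ)‖ = Real.sqrt 6 := by
    rw [← hwnorm, Real.sqrt_sq (norm_nonneg _)]
  have hδnorm : ‖δ‖ = 1 := by
    have hii : inner (𝕜 := ℂ) δ δ = (1 : ℂ) := by
      rw [hδdef, inner_single_single, if_pos rfl, map_one, one_mul]
    rw [inner_self_eq_norm_sq_to_K] at hii
    have h2 : ‖δ‖ ^ 2 = 1 := by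
      apply Complex.ofReal_injective
      push_cast at hii ⊢
      exact hii
    nlinarith [norm_nonneg δ]
  calc Real.sqrt 6 = ‖A (A δ)‖ := hnorm.symm
    _ ≤ ‖A‖ * ‖A δ‖ := A.le_opNorm _
    _ ≤ ‖A‖ * (‖A‖ * ‖δ‖) := mul_le_mul_of_nonneg_left (A.le_opNorm δ) (norm_nonneg A)
    _ = ‖A‖ ^ 2 := by rw [hδnorm, mul_one]; ring

include hz hord in
lemma main : ∃ N : MonoidAlgebra ℂ Γ → ℝ, IsCstarNorm N ∧
    (∀ a, N a ≤ ‖lam Γ a‖) ∧ (∃ a, N a < ‖lam Γ a‖) := by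
  have hbdd : ∀ a : MonoidAlgebra ℂ Γ,
      BddAbove (Set.range fun j : ℕ => ‖piRep hz hord (TT_norm j) a‖) := fun a =>
    ⟨‖lam Γ a‖, by rintro y ⟨j, rfl⟩; exact piRep_norm_le hz hord (TT_norm j) a⟩
  set N : MonoidAlgebra ℂ Γ → ℝ := fun a => ⨆ j : ℕ, ‖piRep hz hord (TT_norm j) a‖ with hNdef
  have hle : ∀ a, N a ≤ ‖lam Γ a‖ := fun a =>
    ciSup_le fun j => piRep_norm_le hz hord (TT_norm j) a
  have hnn : ∀ a, 0 ≤ N a := fun a =>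
    le_trans (norm_nonneg _) (le_ciSup (hbdd a) 0)
  have heq0 : ∀ a, N a = 0 ↔ a = 0 := by
    intro a
    constructor
    · intro h
      refine piRep_faithful hz hord a fun j => ?_
      have h1 : ‖piRep hz hord (TT_norm j) a‖ ≤ 0 := h ▸ le_ciSup (hbdd a) j
      exact norm_eq_zero.mp (le_antisymm h1 (norm_nonneg _))
    · intro h
      subst h
      have h1 : ∀ j : ℕ, ‖piRep hz hord (TT_norm j) (0 : MonoidAlgebra ℂ Γ)‖ = 0 :=
        fun j => by rw [map_zero, norm_zero]
      rw [hNdef]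
      simp only [h1]
      exact ciSup_const
  have hadd : ∀ a b, N (a + b) ≤ N a + N b := by
    intro a b
    refine ciSup_le fun j => ?_
    calc ‖piRep hz hord (TT_norm j) (a + b)‖
        = ‖piRep hz hord (TT_norm j) a + piRep hz hord (TT_norm j) b‖ := by rw [map_add]
      _ ≤ ‖piRep hz hord (TT_norm j) a‖ + ‖piRep hz hord (TT_norm j) b‖ := norm_add_le _ _
      _ ≤ N a + N b := add_le_add (le_ciSup (hbdd a) j) (le_ciSup (hbdd b) j)
  have hsmul : ∀ (c : ℂ) (a), N (c • a) = ‖c‖ * N a := by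
    intro c a
    have h1 : ∀ j : ℕ, ‖piRep hz hord (TT_norm j) (c • a)‖
        = ‖c‖ * ‖piRep hz hord (TT_norm j) a‖ := fun j => by
      rw [map_smul, norm_smul c (piRep hz hord (TT_norm j) a)]
    rw [hNdef]
    simp only [h1]
    rw [Real.mul_iSup_of_nonneg (norm_nonneg c)]
  have hmul : ∀ a b, N (a * b) ≤ N a * N b := by
    intro a b
    refine ciSup_le fun j => ?_
    calc ‖piRep hz hord (TT_norm j) (a * b)‖
        = ‖piRep hz hord (TT_norm j) a * piRep hz hord (TT_norm j) b‖ := by rw [map_mul]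
      _ ≤ ‖piRep hz hord (TT_norm j) a‖ * ‖piRep hz hord (TT_norm j) b‖ := norm_mul_le _ _
      _ ≤ N a * N b := mul_le_mul (le_ciSup (hbdd a) j) (le_ciSup (hbdd b) j)
          (norm_nonneg _) (hnn a)
  have hcstar : ∀ a, N (gaStar a * a) = N a ^ 2 := by
    intro a
    have h1 : ∀ j : ℕ, ‖piRep hz hord (TT_norm j) (gaStar a * a)‖
        = ‖piRep hz hord (TT_norm j) a‖ ^ 2 := fun j => by
      rw [map_mul, piRep_star hz hord (TT_norm j),
        CStarRing.norm_star_mul_self (x := piRep hz hord (TT_norm j) a)]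
      ring
    rw [hNdef]
    simp only [h1]
    exact ciSup_sq _ (fun j => norm_nonneg _) (hbdd a)
  have hNa0 : N (1 + MonoidAlgebra.single z (1 : ℂ)) ≤ Real.sqrt 2 := by
    refine ciSup_le fun j => ?_
    rw [piRep_a0_norm hz hord (TT_norm j)]
    exact norm_one_add_le j
  have hlow := lam_a0_sq (z := z) hord
  have h6 : 2 < Real.sqrt 6 := by
    nlinarith [Real.sq_sqrt (show (0:ℝ) ≤ 6 by norm_num), Real.sqrt_nonneg 6]
  have hfin : Real.sqrt 2 < ‖lam Γ (1 + MonoidAlgebra.single z (1 : ℂ))‖ := by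
    nlinarith [Real.sq_sqrt (show (0:ℝ) ≤ 2 by norm_num), Real.sqrt_nonneg 2,
      norm_nonneg (lam Γ (1 + MonoidAlgebra.single z (1 : ℂ)))]
  exact ⟨N, ⟨hnn, heq0, hadd, hsmul, hmul, hcstar⟩, hle,
    ⟨1 + MonoidAlgebra.single z (1 : ℂ), lt_of_le_of_lt hNa0 hfin⟩⟩

end CstarProof

/-- If a countable discrete group has a central element of infinite order,
then its complex group ring is not C*_r-unique. -/
theorem not_cstarRedUnique_of_central_element_of_infinite_order
    (Γ : Type*) [Group Γ] [Countable Γ] (z : Γ) (hz : z ∈ Subgroup.center Γ)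
    (hord : ¬ IsOfFinOrder z) :
    ¬ IsCstarRedUnique Γ := by
  intro hU
  exact hU (CstarProof.main hz hord)
end
end

section
/- Let Γ be a countable discrete group whose FC-centre Γ_fc is finite. Then the central granularity of Γ is σ(Γ) = 1/|Γ_fc|, i.e., the infimum of τ(p) over nonzero orthogonal projections p in the center of the group von Neumann algebra LΓ equals 1/|Γ_fc|, and it is attained. -/
set_option maxHeartbeats 1000000
set_option synthInstance.maxHeartbeats 400000
noncomputable section

open scoped ENNReal

set_option linter.unusedSectionVars false
set_option linter.unusedVariables false
namespace GroupCstar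

variable {G : Type*} [Group G]

local notation "⟪" x ", " y "⟫" => @inner ℂ _ _ x y

lemma l2_ext {f g : l2 G} (h : ∀ x, (f : ∀ _ : G, ℂ) x = g x) : f = g :=
  Subtype.ext (funext h)

lemma deltaOne_apply_one : (deltaOne G : ∀ _ : G, ℂ) 1 = 1 := by
  letI := Classical.decEq G
  exact lp.single_apply_self (E := fun _ : G => ℂ) 2 (1 : G) (1 : ℂ)

lemma deltaOne_apply_ne {x : G} (h : x ≠ 1) : (deltaOne G : ∀ _ : G, ℂ) x = 0 := by
  letI := Classical.decEq G
  exact lp.single_apply_ne (E := fun _ : G => ℂ) 2 1 1 h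

lemma lam_apply_apply (a : MonoidAlgebra ℂ G) (f : l2 G) (x : G) :
    (lam G a f : ∀ _ : G, ℂ) x = a.coeff.sum fun g c => c * f (g⁻¹ * x) := by
  rw [lam, MonoidAlgebra.lift_apply, Finsupp.sum, Finsupp.sum]
  simp only [ContinuousLinearMap.coe_sum', Finset.sum_apply, lp.coeFn_sum,
    ContinuousLinearMap.coe_smul', Pi.smul_apply, lp.coeFn_smul, smul_eq_mul]
  rfl

lemma lam_deltaOne_apply (a : MonoidAlgebra ℂ G) (x : G) :
    (lam G a (deltaOne G) : ∀ _ : G, ℂ) x = a.coeff x := by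
  classical
  have h0 : ∀ g ∈ a.coeff.support, g ≠ x →
      a.coeff g * (deltaOne G : ∀ _ : G, ℂ) (g⁻¹ * x) = 0 := by
    intro g _ hgx
    rw [deltaOne_apply_ne (by simp [inv_mul_eq_one, eq_comm]; exact fun h => hgx h.symm), mul_zero]
  have h1 : x ∉ a.coeff.support → a.coeff x * (deltaOne G : ∀ _ : G, ℂ) (x⁻¹ * x) = 0 := fun hx => by
    rw [Finsupp.notMem_support_iff.mp hx, zero_mul]
  rw [lam_apply_apply, Finsupp.sum, Finset.sum_eq_single x h0 h1, inv_mul_cancel,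
    deltaOne_apply_one, mul_one]

lemma tau_apply_one (x : B G) : tau x = (x (deltaOne G) : ∀ _ : G, ℂ) 1 := by
  letI := Classical.decEq G
  rw [tau]
  rw [show deltaOne G = lp.single 2 (1 : G) (1 : ℂ) from rfl, lp.inner_single_left]
  simp [RCLike.inner_apply]

lemma tau_lam (a : MonoidAlgebra ℂ G) : tau (lam G a) = a.coeff 1 := by
  rw [tau_apply_one, lam_deltaOne_apply]

lemma lam_injective : Function.Injective (lam G) := fun a b h =>
  MonoidAlgebra.ext (Finsupp.ext fun x => by rw [← lam_deltaOne_apply a x, ← lam_deltaOne_apply b x, h])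

lemma lam_mem_vN (a : MonoidAlgebra ℂ G) : lam G a ∈ vN G :=
  fun t ht => (ht _ ⟨a, rfl⟩).symm

end GroupCstar
namespace GroupCstar

variable {G : Type*} [Group G]

local notation "⟪" x ", " y "⟫" => @inner ℂ _ _ x y

/-- The right regular representation. -/
def rightReg (h : G) : B G :=
  (lpShift (Equiv.mulRight h⁻¹)).toLinearIsometry.toContinuousLinearMap

lemma rightReg_apply (h : G) (f : l2 G) (x : G) :
    (rightReg h f : ∀ _ : G, ℂ) x = f (x * h) := by
  show f (x * h⁻¹⁻¹) = f (x * h)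
  rw [inv_inv]

lemma rightReg_mem_commutant (h : G) :
    rightReg h ∈ commutant (Set.range (lam G)) := by
  rintro s ⟨a, rfl⟩
  ext f x
  simp only [ContinuousLinearMap.mul_apply, lam_apply_apply, rightReg_apply]
  exact Finsupp.sum_congr fun g _ => by rw [mul_assoc]

lemma leftReg_deltaOne (h : G) :
    leftReg h (deltaOne G) = rightReg h⁻¹ (deltaOne G) := by
  apply l2_ext
  intro x
  rw [leftReg_apply, rightReg_apply]
  by_cases hx : x = h
  · subst hx
    rw [inv_mul_cancel, mul_inv_cancel]
  · rw [deltaOne_apply_ne (by simpa [inv_mul_eq_one, eq_comm] using fun hh => hx hh.symm),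
      deltaOne_apply_ne (by simpa [mul_inv_eq_one] using hx)]

lemma single_eq_leftReg_deltaOne (g : G) :
    (letI := Classical.decEq G; lp.single (E := fun _ : G => ℂ) 2 g 1) =
      leftReg g (deltaOne G) := by
  letI := Classical.decEq G
  apply l2_ext
  intro x
  rw [leftReg_apply]
  by_cases hx : x = g
  · subst hx
    rw [lp.single_apply_self, inv_mul_cancel, deltaOne_apply_one]
  · rw [lp.single_apply_ne 2 g 1 hx,
      deltaOne_apply_ne (by simpa [inv_mul_eq_one, eq_comm] using fun hh => hx hh.symm)]

lemma single_eq_smul (g : G) (c : ℂ) :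
    (letI := Classical.decEq G; lp.single (E := fun _ : G => ℂ) 2 g c) =
      c • (letI := Classical.decEq G; lp.single (E := fun _ : G => ℂ) 2 g 1) := by
  letI := Classical.decEq G
  apply l2_ext
  intro x
  rw [lp.coeFn_smul, Pi.smul_apply, smul_eq_mul]
  by_cases hx : x = g
  · subst hx; rw [lp.single_apply_self, lp.single_apply_self, mul_one]
  · rw [lp.single_apply_ne (E := fun _ : G => ℂ) 2 g c hx, lp.single_apply_ne (E := fun _ : G => ℂ) 2 g 1 hx, mul_zero]

lemma vN_apply_delta {x : B G} (hx : x ∈ vN G) (g : G) :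
    x (leftReg g (deltaOne G)) = rightReg g⁻¹ (x (deltaOne G)) := by
  have hcx := hx (rightReg g⁻¹) (rightReg_mem_commutant g⁻¹)
  rw [leftReg_deltaOne]
  calc x (rightReg g⁻¹ (deltaOne G)) = (x * rightReg g⁻¹) (deltaOne G) := rfl
    _ = (rightReg g⁻¹ * x) (deltaOne G) := by rw [hcx]
    _ = rightReg g⁻¹ (x (deltaOne G)) := rfl

lemma vN_ext {x y : B G} (hx : x ∈ vN G) (hy : y ∈ vN G)
    (h : x (deltaOne G) = y (deltaOne G)) : x = y := by
  letI := Classical.decEq G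
  have key : ∀ g : G, x (lp.single (E := fun _ : G => ℂ) 2 g 1) =
      y (lp.single (E := fun _ : G => ℂ) 2 g 1) := by
    intro g
    rw [single_eq_leftReg_deltaOne, vN_apply_delta hx, vN_apply_delta hy, h]
  refine ContinuousLinearMap.ext fun f => ?_
  have hsx : HasSum (fun g : G => lp.single (E := fun _ : G => ℂ) 2 g (f g)) f :=
    lp.hasSum_single (by norm_num) f
  have h1 : HasSum (fun g : G => x (lp.single (E := fun _ : G => ℂ) 2 g (f g))) (x f) :=
    x.hasSum hsx
  have h2 : HasSum (fun g : G => y (lp.single (E := fun _ : G => ℂ) 2 g (f g))) (y f) :=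
    y.hasSum hsx
  refine h1.unique ?_
  convert h2 using 2 with g
  rw [single_eq_smul, map_smul, map_smul, key]

lemma inner_leftReg (g : G) (f h : l2 G) :
    ⟪leftReg g f, h⟫ = ⟪f, leftReg g⁻¹ h⟫ := by
  set U := lpShift (Equiv.mulLeft g) with hU
  have hsymm : U.symm h = leftReg g⁻¹ h := by
    apply l2_ext
    intro x
    show h (Equiv.mulLeft g x) = h (g⁻¹⁻¹ * x)
    rw [inv_inv]; rfl
  calc ⟪leftReg g f, h⟫ = ⟪U f, U (U.symm h)⟫ := by rw [U.apply_symm_apply]; rfl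
    _ = ⟪f, U.symm h⟫ := U.inner_map_map f _
    _ = ⟪f, leftReg g⁻¹ h⟫ := by rw [hsymm]

end GroupCstar
namespace GroupCstar

variable {G : Type*} [Group G]

lemma one_mem_fcCentre : (1 : G) ∈ fcCentre G := by
  refine Set.Finite.subset (Set.finite_singleton 1) fun x hx => ?_
  obtain ⟨c, hc⟩ := isConj_iff.mp hx
  simp [← hc]

lemma conjClass_eq_of_isConj {g h : G} (hg : IsConj g h) : conjClass g = conjClass h :=
  Set.ext fun x => ⟨fun hx => hg.symm.trans hx, fun hx => hg.trans hx⟩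

lemma conj_mem_fcCentre {g : G} (hg : g ∈ fcCentre G) (h : G) : h * g * h⁻¹ ∈ fcCentre G := by
  have he : conjClass (h * g * h⁻¹) = conjClass g :=
    (conjClass_eq_of_isConj (isConj_iff.mpr ⟨h, rfl⟩)).symm
  show (conjClass (h * g * h⁻¹)).Finite
  rw [he]; exact hg

lemma mul_mem_fcCentre {g h : G} (hg : g ∈ fcCentre G) (hh : h ∈ fcCentre G) :
    g * h ∈ fcCentre G := by
  have hsub : conjClass (g * h) ⊆ (fun q : G × G => q.1 * q.2) '' (conjClass g ×ˢ conjClass h) := by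
    intro x hx
    obtain ⟨c, rfl⟩ := isConj_iff.mp hx
    exact ⟨(c * g * c⁻¹, c * h * c⁻¹), ⟨isConj_iff.mpr ⟨c, rfl⟩, isConj_iff.mpr ⟨c, rfl⟩⟩, by group⟩
  exact ((hg.prod hh).image _).subset hsub

lemma inv_mem_fcCentre {g : G} (hg : g ∈ fcCentre G) : g⁻¹ ∈ fcCentre G := by
  have hsub : conjClass g⁻¹ ⊆ (fun x : G => x⁻¹) '' conjClass g := by
    intro x hx
    obtain ⟨c, rfl⟩ := isConj_iff.mp hx
    exact ⟨c * g * c⁻¹, isConj_iff.mpr ⟨c, rfl⟩, by group⟩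
  exact (hg.image _).subset hsub

lemma mem_conjClass_self (g : G) : g ∈ conjClass g := IsConj.refl g

end GroupCstar
namespace GroupCstar

variable {G : Type*} [Group G]

lemma leftReg_eq_lam (h : G) : leftReg h = lam G (MonoidAlgebra.single h 1) := by
  rw [lam, MonoidAlgebra.lift_single, one_smul]; rfl

lemma central_xi_conj {p : B G} (hc : p ∈ vNCenter G) (h y : G) :
    (p (deltaOne G) : ∀ _ : G, ℂ) (h * y * h⁻¹) = (p (deltaOne G) : ∀ _ : G, ℂ) y := by
  have hcomm : p * leftReg h = leftReg h * p :=
    hc.2 (leftReg h) (by rw [leftReg_eq_lam]; exact lam_mem_vN _)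
  have h1 : p (leftReg h (deltaOne G)) = leftReg h (p (deltaOne G)) := by
    calc p (leftReg h (deltaOne G)) = (p * leftReg h) (deltaOne G) := rfl
      _ = (leftReg h * p) (deltaOne G) := by rw [hcomm]
      _ = leftReg h (p (deltaOne G)) := rfl
  have h3 : leftReg h (p (deltaOne G)) = rightReg h⁻¹ (p (deltaOne G)) := by
    rw [← h1]; exact vN_apply_delta hc.1 h
  have h4 := congrArg (fun f : l2 G => (f : ∀ _ : G, ℂ) (h * y)) h3
  simp only [leftReg_apply, rightReg_apply] at h4
  rw [inv_mul_cancel_left] at h4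
  exact h4.symm

lemma tau_re_lower_bound (hfc : (fcCentre G).Finite)
    {p : B G} (hc : p ∈ vNCenter G) (hidem : p * p = p) (hne : p ≠ 0) :
    ((Nat.card (fcCentre G) : ℝ))⁻¹ ≤ (tau p).re := by
  classical
  set ξ := p (deltaOne G) with hξ
  have hconj : ∀ h y : G, (ξ : ∀ _ : G, ℂ) (h * y * h⁻¹) = (ξ : ∀ _ : G, ℂ) y :=
    central_xi_conj hc
  have hsupp : ∀ g : G, g ∉ fcCentre G → (ξ : ∀ _ : G, ℂ) g = 0 := by
    intro g hg
    by_contra hne0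
    apply hg
    have hsum : Summable fun x : G => ‖(ξ : ∀ _ : G, ℂ) x‖ ^ (2 : ℝ≥0∞).toReal :=
      (lp.memℓp ξ).summable two_toReal_pos
    have hpos : 0 < ‖(ξ : ∀ _ : G, ℂ) g‖ ^ (2 : ℝ≥0∞).toReal :=
      Real.rpow_pos_of_pos (norm_pos_iff.mpr hne0) _
    have hev := hsum.tendsto_cofinite_zero.eventually (gt_mem_nhds hpos)
    rw [Filter.eventually_cofinite] at hev
    refine Set.Finite.subset hev fun x hx => ?_
    obtain ⟨c, rfl⟩ := isConj_iff.mp hx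
    simp only [Set.mem_setOf_eq, hconj c g]
    exact lt_irrefl _
  -- the FC-centre as a finite subgroup
  let H : Subgroup G :=
    { carrier := fcCentre G
      one_mem' := one_mem_fcCentre
      mul_mem' := fun ha hb => mul_mem_fcCentre ha hb
      inv_mem' := fun ha => inv_mem_fcCentre ha }
  haveI hfin : Finite ↥H := hfc.to_subtype
  letI : Fintype ↥H := Fintype.ofFinite _
  let a' : MonoidAlgebra ℂ ↥H := ∑ g : ↥H, MonoidAlgebra.single g ((ξ : ∀ _ : G, ℂ) ↑g)
  have ha'app : ∀ g : ↥H, a'.coeff g = (ξ : ∀ _ : G, ℂ) ↑g := by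
    intro g
    rw [show a'.coeff g = ∑ h : ↥H, (MonoidAlgebra.single h ((ξ : ∀ _ : G, ℂ) ↑h)).coeff g by
      rw [MonoidAlgebra.coeff_sum, Finset.sum_apply']]
    simp [Finsupp.single_apply]
  let ι := MonoidAlgebra.mapDomainAlgHom ℂ ℂ H.subtype
  let a : MonoidAlgebra ℂ G := ι a'
  have haval : ∀ x : G, a.coeff x = (ξ : ∀ _ : G, ℂ) x := by
    intro x
    by_cases hx : x ∈ fcCentre G
    · have h1 : a.coeff ((⟨x, hx⟩ : ↥H) : G) = a'.coeff ⟨x, hx⟩ :=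
        Finsupp.mapDomain_apply Subtype.val_injective a'.coeff ⟨x, hx⟩
      rw [show x = ((⟨x, hx⟩ : ↥H) : G) from rfl, h1, ha'app]
    · have hx' : x ∉ Set.range (H.subtype) := by
        rintro ⟨g, rfl⟩; exact hx g.2
      rw [show a.coeff x = Finsupp.mapDomain (H.subtype) a'.coeff x from rfl,
        Finsupp.mapDomain_notin_range _ _ hx', hsupp x hx]
  have hpa : p = lam G a := by
    refine vN_ext hc.1 (lam_mem_vN a) ?_
    exact (l2_ext fun x => by rw [lam_deltaOne_apply, haval]).symm
  have hane : a ≠ 0 := fun h0 => hne (by rw [hpa, h0, map_zero])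
  have hamul : a * a = a := lam_injective (by rw [map_mul, ← hpa, hidem, hpa])
  have hinj : Function.Injective ι := fun u v huv =>
    MonoidAlgebra.mapDomain_injective (f := H.subtype) Subtype.val_injective huv
  have ha'mul : a' * a' = a' := hinj (by rw [map_mul]; exact hamul)
  have ha'ne : a' ≠ 0 := fun h0 => hane (by rw [show a = ι a' from rfl, h0, map_zero])
  let L : MonoidAlgebra ℂ ↥H →ₗ[ℂ] MonoidAlgebra ℂ ↥H := LinearMap.mulLeft ℂ a'
  have hLL : L ∘ₗ L = L := by
    show (LinearMap.mulLeft ℂ a').comp (LinearMap.mulLeft ℂ a') = LinearMap.mulLeft ℂ a'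
    rw [← LinearMap.mulLeft_mul, ha'mul]
  obtain ⟨W, hW⟩ := (LinearMap.isProj_iff_isIdempotentElem L).mpr hLL
  haveI : Module.Finite ℂ (MonoidAlgebra ℂ ↥H) :=
    Module.Finite.of_basis (MonoidAlgebra.basis ↥H ℂ)
  have htr : LinearMap.trace ℂ _ L = (Module.finrank ℂ W : ℂ) := hW.trace
  have htr2 : LinearMap.trace ℂ _ L = (Fintype.card ↥H : ℂ) * (ξ : ∀ _ : G, ℂ) 1 := by
    rw [LinearMap.trace_eq_matrix_trace ℂ (MonoidAlgebra.basis ↥H ℂ) L,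
      Matrix.trace]
    have hdiag : ∀ g : ↥H,
        (LinearMap.toMatrix (MonoidAlgebra.basis ↥H ℂ) (MonoidAlgebra.basis ↥H ℂ) L).diag g
          = (ξ : ∀ _ : G, ℂ) 1 := by
      intro g
      rw [Matrix.diag_apply, LinearMap.toMatrix_apply]
      rw [show (MonoidAlgebra.basis ↥H ℂ) g
        = (MonoidAlgebra.single g (1:ℂ)) by simp]
      show (a' * MonoidAlgebra.single g (1:ℂ)).coeff g = (ξ : ∀ _ : G, ℂ) 1
      rw [MonoidAlgebra.coeff_mul_single_apply, mul_inv_cancel, mul_one, ha'app,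
        OneMemClass.coe_one]
    rw [Finset.sum_congr rfl fun g _ => hdiag g, Finset.sum_const, Finset.card_univ,
      nsmul_eq_mul]
  have haW : a' ∈ W := by
    have h1 : L a' ∈ W := hW.map_mem a'
    rwa [show L a' = a' from ha'mul] at h1
  have hWne : W ≠ ⊥ := fun h => ha'ne (by simpa [h] using haW)
  have hrank : 1 ≤ Module.finrank ℂ W := Submodule.one_le_finrank_iff.mpr hWne
  have hcardpos : 0 < Fintype.card ↥H := Fintype.card_pos
  have hxi1 : (ξ : ∀ _ : G, ℂ) 1 =
      (((Module.finrank ℂ W : ℝ) / (Fintype.card ↥H : ℝ) : ℝ) : ℂ) := by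
    have hcne : (Fintype.card ↥H : ℂ) ≠ 0 := Nat.cast_ne_zero.mpr hcardpos.ne'
    rw [Complex.ofReal_div, Complex.ofReal_natCast, Complex.ofReal_natCast, eq_div_iff hcne]
    rw [mul_comm, ← htr2]
    exact_mod_cast htr
  have htau : (tau p).re = (Module.finrank ℂ W : ℝ) / (Fintype.card ↥H : ℝ) := by
    rw [tau_apply_one, ← hξ, hxi1, Complex.ofReal_re]
  have hcard : (Fintype.card ↥H : ℝ) = (Nat.card (fcCentre G) : ℝ) := by
    rw [← Nat.card_eq_fintype_card]
    exact_mod_cast congrArg (Nat.cast (R := ℝ))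
      (Nat.card_congr (Equiv.subtypeEquivRight fun x => Iff.rfl))
  rw [htau, ← hcard, inv_eq_one_div]
  gcongr
  exact_mod_cast hrank

end GroupCstar
namespace GroupCstar

variable {G : Type*} [Group G]

local notation "⟪" x ", " y "⟫" => @inner ℂ _ _ x y

lemma tau_zero : tau (0 : B G) = 0 := by simp [tau]

section Projection

variable (hfc : (fcCentre G).Finite)

/-- The averaging projection over the (finite) FC-centre. -/
noncomputable def fcAvg : MonoidAlgebra ℂ G :=
  ((Nat.card (fcCentre G) : ℂ))⁻¹ • ∑ g ∈ hfc.toFinset, MonoidAlgebra.single g (1 : ℂ)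

lemma card_fc_eq (hfc : (fcCentre G).Finite) :
    hfc.toFinset.card = Nat.card (fcCentre G) := by
  rw [Nat.card_coe_set_eq, Set.ncard_eq_toFinset_card _ hfc]

lemma card_fc_pos (hfc : (fcCentre G).Finite) : 0 < Nat.card (fcCentre G) := by
  haveI := hfc.to_subtype
  exact Nat.card_pos_iff.mpr ⟨⟨⟨1, one_mem_fcCentre⟩⟩, inferInstance⟩

lemma fcAvg_sum_apply_mem {x : G} (hx : x ∈ fcCentre G) :
    (∑ g ∈ hfc.toFinset, MonoidAlgebra.single g (1 : ℂ)).coeff x = 1 := by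
  classical
  rw [show (∑ g ∈ hfc.toFinset, MonoidAlgebra.single g (1 : ℂ)).coeff x
      = ∑ g ∈ hfc.toFinset, (MonoidAlgebra.single g (1 : ℂ)).coeff x by
        rw [MonoidAlgebra.coeff_sum, Finset.sum_apply']]
  simp only [MonoidAlgebra.coeff_single_apply]
  rw [Finset.sum_ite_eq' hfc.toFinset x (fun _ => (1 : ℂ)),
    if_pos (hfc.mem_toFinset.mpr hx)]

lemma fcAvg_sum_apply_not_mem {x : G} (hx : x ∉ fcCentre G) :
    (∑ g ∈ hfc.toFinset, MonoidAlgebra.single g (1 : ℂ)).coeff x = 0 := by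
  classical
  rw [show (∑ g ∈ hfc.toFinset, MonoidAlgebra.single g (1 : ℂ)).coeff x
      = ∑ g ∈ hfc.toFinset, (MonoidAlgebra.single g (1 : ℂ)).coeff x by
        rw [MonoidAlgebra.coeff_sum, Finset.sum_apply']]
  simp only [MonoidAlgebra.coeff_single_apply]
  rw [Finset.sum_ite_eq' hfc.toFinset x (fun _ => (1 : ℂ)),
    if_neg (fun h => hx (hfc.mem_toFinset.mp h))]

lemma fcAvg_apply_mem {x : G} (hx : x ∈ fcCentre G) :
    (fcAvg hfc).coeff x = ((Nat.card (fcCentre G) : ℂ))⁻¹ := by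
  rw [fcAvg, MonoidAlgebra.coeff_smul, Finsupp.smul_apply, fcAvg_sum_apply_mem hfc hx, smul_eq_mul, mul_one]

lemma fcAvg_apply_not_mem {x : G} (hx : x ∉ fcCentre G) :
    (fcAvg hfc).coeff x = 0 := by
  rw [fcAvg, MonoidAlgebra.coeff_smul, Finsupp.smul_apply, fcAvg_sum_apply_not_mem hfc hx, smul_eq_mul, mul_zero]

lemma fcAvg_mul_self : fcAvg hfc * fcAvg hfc = fcAvg hfc := by
  classical
  have hcast : ((Nat.card (fcCentre G) : ℂ)) ≠ 0 :=
    Nat.cast_ne_zero.mpr (card_fc_pos hfc).ne'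
  have hinner : ∀ g ∈ hfc.toFinset,
      ∑ h ∈ hfc.toFinset, MonoidAlgebra.single (g * h) (1 : ℂ)
        = ∑ k ∈ hfc.toFinset, MonoidAlgebra.single k (1 : ℂ) := by
    intro g hg
    refine Finset.sum_nbij' (fun h => g * h) (fun k => g⁻¹ * k) ?_ ?_ ?_ ?_ ?_
    · intro a ha
      exact hfc.mem_toFinset.mpr
        (mul_mem_fcCentre (hfc.mem_toFinset.mp hg) (hfc.mem_toFinset.mp ha))
    · intro a ha
      exact hfc.mem_toFinset.mpr
        (mul_mem_fcCentre (inv_mem_fcCentre (hfc.mem_toFinset.mp hg)) (hfc.mem_toFinset.mp ha))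
    · intro a _; group
    · intro a _; group
    · intro a _; rfl
  have hSS : (∑ g ∈ hfc.toFinset, MonoidAlgebra.single g (1 : ℂ))
      * (∑ g ∈ hfc.toFinset, MonoidAlgebra.single g (1 : ℂ))
      = (Nat.card (fcCentre G) : ℂ) • ∑ g ∈ hfc.toFinset, MonoidAlgebra.single g (1 : ℂ) := by
    rw [Finset.sum_mul_sum]
    have : ∀ g ∈ hfc.toFinset, ∀ h ∈ hfc.toFinset,
        MonoidAlgebra.single g (1 : ℂ) * MonoidAlgebra.single h (1 : ℂ)
          = MonoidAlgebra.single (g * h) (1 : ℂ) := by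
      intro g _ h _; rw [MonoidAlgebra.single_mul_single, one_mul]
    rw [Finset.sum_congr rfl fun g hg => Finset.sum_congr rfl fun h hh => this g hg h hh]
    rw [Finset.sum_congr rfl hinner, Finset.sum_const, ← card_fc_eq hfc]
    rw [← Nat.cast_smul_eq_nsmul ℂ]  -- deprecated ok
  rw [fcAvg, smul_mul_smul_comm, hSS, smul_smul]
  congr 1
  field_simp

lemma fcAvg_central (b : MonoidAlgebra ℂ G) : b * fcAvg hfc = fcAvg hfc * b := by
  classical
  induction b using MonoidAlgebra.induction_on with
  | of g =>
    have hre : ∑ h ∈ hfc.toFinset, MonoidAlgebra.single (g * h) (1 : ℂ)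
        = ∑ h ∈ hfc.toFinset, MonoidAlgebra.single (h * g) (1 : ℂ) := by
      refine Finset.sum_nbij' (fun h => g * h * g⁻¹) (fun k => g⁻¹ * k * g) ?_ ?_ ?_ ?_ ?_
      · intro a ha
        exact hfc.mem_toFinset.mpr (conj_mem_fcCentre (hfc.mem_toFinset.mp ha) g)
      · intro a ha
        have := conj_mem_fcCentre (hfc.mem_toFinset.mp ha) g⁻¹
        rw [inv_inv] at this
        exact hfc.mem_toFinset.mpr this
      · intro a _; group
      · intro a _; group
      · intro a _
        congr 1
        group
    rw [fcAvg, mul_smul_comm, smul_mul_assoc]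
    congr 1
    rw [Finset.mul_sum, Finset.sum_mul]
    have h1 : ∀ h ∈ hfc.toFinset,
        (MonoidAlgebra.of ℂ G) g * MonoidAlgebra.single h (1 : ℂ)
          = MonoidAlgebra.single (g * h) (1 : ℂ) := by
      intro h _
      rw [MonoidAlgebra.of_apply, MonoidAlgebra.single_mul_single, one_mul]
    have h2 : ∀ h ∈ hfc.toFinset,
        MonoidAlgebra.single h (1 : ℂ) * (MonoidAlgebra.of ℂ G) g
          = MonoidAlgebra.single (h * g) (1 : ℂ) := by
      intro h _
      rw [MonoidAlgebra.of_apply, MonoidAlgebra.single_mul_single, one_mul]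
    rw [Finset.sum_congr rfl h1, Finset.sum_congr rfl h2, hre]
  | add f g hf hg => rw [add_mul, mul_add, hf, hg]
  | smul r f hf => rw [smul_mul_assoc, mul_smul_comm, hf]

end Projection

end GroupCstar
namespace GroupCstar

variable {G : Type*} [Group G]

local notation "⟪" x ", " y "⟫" => @inner ℂ _ _ x y

lemma lam_fcAvg_eq (hfc : (fcCentre G).Finite) :
    lam G (fcAvg hfc)
      = ((Nat.card (fcCentre G) : ℂ))⁻¹ • ∑ g ∈ hfc.toFinset, leftReg g := by
  rw [fcAvg, map_smul, map_sum]
  congr 1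
  exact Finset.sum_congr rfl fun g _ => (leftReg_eq_lam g).symm

lemma isSelfAdjoint_lam_fcAvg (hfc : (fcCentre G).Finite) :
    IsSelfAdjoint (lam G (fcAvg hfc)) := by
  rw [ContinuousLinearMap.isSelfAdjoint_iff_isSymmetric]
  intro f h
  rw [lam_fcAvg_eq hfc]
  set c : ℂ := ((Nat.card (fcCentre G) : ℂ))⁻¹ with hc
  have hcconj : (starRingEnd ℂ) c = c := by rw [hc, map_inv₀, map_natCast]
  simp only [ContinuousLinearMap.coe_coe]
  rw [ContinuousLinearMap.smul_apply, ContinuousLinearMap.smul_apply,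
    inner_smul_left, inner_smul_right, hcconj]
  congr 1
  rw [ContinuousLinearMap.sum_apply, ContinuousLinearMap.sum_apply, sum_inner, inner_sum]
  rw [Finset.sum_congr rfl fun g _ => inner_leftReg g f h]
  refine Finset.sum_nbij' (fun g : G => g⁻¹) (fun g : G => g⁻¹) ?_ ?_ ?_ ?_ ?_
  · intro g hg
    exact hfc.mem_toFinset.mpr (inv_mem_fcCentre (hfc.mem_toFinset.mp hg))
  · intro g hg
    exact hfc.mem_toFinset.mpr (inv_mem_fcCentre (hfc.mem_toFinset.mp hg))
  · intro g _; exact inv_inv g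
  · intro g _; exact inv_inv g
  · intro g _; rfl

lemma lam_fcAvg_mem_center (hfc : (fcCentre G).Finite) :
    lam G (fcAvg hfc) ∈ vNCenter G := by
  refine ⟨lam_mem_vN _, fun y hy => ?_⟩
  refine hy (lam G (fcAvg hfc)) ?_
  rintro s ⟨b, rfl⟩
  rw [← map_mul, ← map_mul, fcAvg_central hfc b]

lemma tau_lam_fcAvg (hfc : (fcCentre G).Finite) :
    tau (lam G (fcAvg hfc)) = ((Nat.card (fcCentre G) : ℂ))⁻¹ := by
  rw [tau_lam, fcAvg_apply_mem hfc one_mem_fcCentre]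

lemma lam_fcAvg_ne_zero (hfc : (fcCentre G).Finite) : lam G (fcAvg hfc) ≠ 0 := by
  intro h0
  have h1 := tau_lam_fcAvg hfc
  rw [h0, tau_zero] at h1
  have hcast : ((Nat.card (fcCentre G) : ℂ)) ≠ 0 :=
    Nat.cast_ne_zero.mpr (card_fc_pos hfc).ne'
  exact hcast (by simpa [eq_comm, inv_eq_zero] using h1)

lemma isProjection_lam_fcAvg (hfc : (fcCentre G).Finite) :
    IsProjection (lam G (fcAvg hfc)) :=
  ⟨isSelfAdjoint_lam_fcAvg hfc, by rw [← map_mul, fcAvg_mul_self hfc]⟩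

lemma tau_re_lam_fcAvg (hfc : (fcCentre G).Finite) :
    (tau (lam G (fcAvg hfc))).re = ((Nat.card (fcCentre G) : ℝ))⁻¹ := by
  rw [tau_lam_fcAvg hfc,
    show ((Nat.card (fcCentre G) : ℂ))⁻¹
      = Complex.ofReal (((Nat.card (fcCentre G) : ℝ))⁻¹) by push_cast; ring]
  exact Complex.ofReal_re _

end GroupCstar

open GroupCstar



open GroupCstar

/-- If the FC-centre of a countable group `Γ` is finite then the central
granularity equals `1/|Γ_fc|`, and it is attained by a nonzero central projection. -/
theorem centralGranularity_eq_of_finite_fcCentre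
    (Γ : Type*) [Group Γ] [Countable Γ] (hfc : (fcCentre Γ).Finite) :
    centralGranularity Γ = ((Nat.card (fcCentre Γ) : ℝ))⁻¹ ∧
      ∃ p : B Γ, p ∈ vNCenter Γ ∧ IsProjection p ∧ p ≠ 0 ∧
        (tau p).re = ((Nat.card (fcCentre Γ) : ℝ))⁻¹ := by
  have hmem : ((Nat.card (fcCentre Γ) : ℝ))⁻¹ ∈
      (fun p => (tau p).re) '' {p : B Γ | p ∈ vNCenter Γ ∧ IsProjection p ∧ p ≠ 0} :=
    ⟨lam Γ (fcAvg hfc), ⟨lam_fcAvg_mem_center hfc, isProjection_lam_fcAvg hfc,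
      lam_fcAvg_ne_zero hfc⟩, tau_re_lam_fcAvg hfc⟩
  have hlb : ∀ y ∈ (fun p => (tau p).re) ''
      {p : B Γ | p ∈ vNCenter Γ ∧ IsProjection p ∧ p ≠ 0},
      ((Nat.card (fcCentre Γ) : ℝ))⁻¹ ≤ y := by
    rintro y ⟨p, ⟨hcen, ⟨hsa, hidem⟩, hne⟩, rfl⟩
    exact tau_re_lower_bound hfc hcen hidem hne
  exact ⟨le_antisymm (csInf_le ⟨_, hlb⟩ hmem) (le_csInf ⟨_, hmem⟩ hlb),
    lam Γ (fcAvg hfc), lam_fcAvg_mem_center hfc, isProjection_lam_fcAvg hfc,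
    lam_fcAvg_ne_zero hfc, tau_re_lam_fcAvg hfc⟩
end
end
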